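/- arXiv:2511.17328 — 6 statements merged into one kernel-verified Lean document; each statement's English description precedes it below -/
import Mathlib

section
/- Suppose a traveling front exists, i.e. c_f > 0 satisfies φ_f(c_f) = θ and U_f(z) < θ for all z < 0. Then for every c with 0 < c < c_f one has φ_f(c) > θ, and for every c > c_f one has φ_f(c) < θ. In particular, c_f is the unique positive root of the equation φ_f(c) = θ. -/
open MeasureTheory Real Filter Set Topology

/-- Front speed index function `φ_f(c) = ∫_{-∞}^0 K - ∫_{-∞}^0 e^{x/c} K(x) dx`. -/
noncomputable def phiF (K : ℝ → ℝ) (c : ℝ) : ℝ :=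
  (∫ x in Iio (0:ℝ), K x) - ∫ x in Iio (0:ℝ), Real.exp (x / c) * K x

/-- Front profile `U_f(z) = (1/c_f) ∫_{-∞}^z e^{(x-z)/c_f} (∫_{-∞}^x K(y) dy) dx`. -/
noncomputable def Uf (K : ℝ → ℝ) (cf z : ℝ) : ℝ :=
  (1 / cf) * ∫ x in Iic z, Real.exp ((x - z) / cf) * ∫ y in Iic x, K y

lemma expIic {b : ℝ} (hb : 0 < b) (a : ℝ) :
    IntegrableOn (fun x => Real.exp (b * x)) (Iic a) := by
  rw [integrableOn_Iic_iff_integrableOn_Iio]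
  have h := (MeasurePreserving.integrableOn_comp_preimage (Measure.measurePreserving_neg _)
      (Homeomorph.neg ℝ).measurableEmbedding).2 (exp_neg_integrableOn_Ioi (-a) hb)
  have heq : (Neg.neg : ℝ → ℝ) ⁻¹' (Ioi (-a)) = Iio a := by ext x; simp
  rw [heq] at h
  refine h.congr_fun (fun x _ => ?_) measurableSet_Iio
  simp [Function.comp]

lemma exp_tendsto_bot {b : ℝ} (hb : 0 < b) :
    Tendsto (fun x => Real.exp (b * x)) atBot (𝓝 0) :=
  Real.tendsto_exp_atBot.comp (tendsto_atBot_atBot_of_monotone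
    (fun _ _ h => by nlinarith) (fun y => ⟨y / b, by rw [mul_div_cancel₀]; exact hb.ne'⟩))

lemma integral_expIic {b : ℝ} (hb : 0 < b) (a : ℝ) :
    ∫ x in Iic a, Real.exp (b * x) = Real.exp (b * a) / b := by
  have := integral_Iic_of_hasDerivAt_of_tendsto' (a := a) (m := 0)
    (f := fun x => Real.exp (b * x) / b) (f' := fun x => Real.exp (b * x))
    (fun x _ => by
      simpa [mul_comm, mul_div_cancel_left₀, hb.ne'] using
        ((Real.hasDerivAt_exp (b * x)).comp x ((hasDerivAt_id x).const_mul b)).div_const b)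
    (expIic hb a) ?_
  · simpa using this
  · simpa using (exp_tendsto_bot hb).div_const b

/-- domination: measurable + bounded by integrable exp on Iic -/
lemma intOn_of_bound {h : ℝ → ℝ} (C : ℝ) {b : ℝ} {a : ℝ} (hb : 0 < b)
    (hm : AEStronglyMeasurable h (volume.restrict (Iic a)))
    (hbd : ∀ x ∈ Iic a, |h x| ≤ C * Real.exp (b * x)) :
    IntegrableOn h (Iic a) := by
  refine Integrable.mono' ((expIic hb a).const_mul C) hm ?_
  refine (ae_restrict_iff' measurableSet_Iic).2 (Eventually.of_forall ?_)
  intro x hx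
  simpa [abs_of_nonneg] using hbd x hx

/-- Integration by parts on `(-∞,0]` against an exponential. -/
lemma ibp (G g : ℝ → ℝ) (b : ℝ)
    (hd : ∀ x, HasDerivAt G (g x) x)
    (hgint : IntegrableOn (fun x => Real.exp (b*x) * g x) (Iic 0))
    (hGint : IntegrableOn (fun x => Real.exp (b*x) * G x) (Iic 0))
    (hlim : Tendsto (fun x => Real.exp (b*x) * G x) atBot (𝓝 0)) :
    ∫ x in Iic (0:ℝ), Real.exp (b*x) * g x
      = G 0 - b * ∫ x in Iic (0:ℝ), Real.exp (b*x) * G x := by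
  have hd2 : ∀ x ∈ Iic (0:ℝ), HasDerivAt (fun x => Real.exp (b*x) * G x)
      (b * (Real.exp (b*x) * G x) + Real.exp (b*x) * g x) x := by
    intro x _
    have he : HasDerivAt (fun x => Real.exp (b*x)) (b * Real.exp (b*x)) x := by
      convert ((hasDerivAt_id' x).const_mul b).exp using 1; ring
    exact (he.mul (hd x)).congr_deriv (by ring)
  have hint : IntegrableOn (fun x => b * (Real.exp (b*x) * G x) + Real.exp (b*x) * g x)
      (Iic (0:ℝ)) := (hGint.const_mul b).add hgint
  have h := integral_Iic_of_hasDerivAt_of_tendsto' hd2 hint hlim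
  rw [integral_add (hGint.const_mul b) hgint, MeasureTheory.integral_const_mul] at h
  simp only [mul_zero, Real.exp_zero, one_mul, sub_zero] at h
  linarith

lemma Kintegrable {K : ℝ → ℝ} (hK : Continuous K)
    (hKdecay : ∃ α > (0:ℝ), ∃ ρ > (0:ℝ), ∀ x : ℝ, |K x| ≤ α * Real.exp (-ρ * |x|)) :
    Integrable K := by
  obtain ⟨α, hα, ρ, hρ, hbd⟩ := hKdecay
  have h1 : IntegrableOn (fun x => Real.exp (-ρ * |x|)) (Iic 0) := by
    refine (expIic hρ 0).congr_fun (fun x hx => ?_) measurableSet_Iic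
    rw [abs_of_nonpos hx]; ring_nf
  have h2 : IntegrableOn (fun x => Real.exp (-ρ * |x|)) (Ioi 0) := by
    refine (exp_neg_integrableOn_Ioi 0 hρ).congr_fun (fun x hx => ?_) measurableSet_Ioi
    rw [abs_of_pos hx]
  have h3 : Integrable (fun x => Real.exp (-ρ * |x|)) := by
    rw [← integrableOn_univ, ← Iic_union_Ioi (a := (0:ℝ))]
    exact h1.union h2
  exact Integrable.mono' (h3.const_mul α) hK.aestronglyMeasurable
    (Eventually.of_forall (fun x => by simpa using hbd x))

lemma primdiff {g : ℝ → ℝ} (hg : Continuous g) (hgi : ∀ a, IntegrableOn g (Iic a)) (x : ℝ) :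
    HasDerivAt (fun z => ∫ y in Iic z, g y) (g x) x := by
  have hrepr : (fun z => ∫ y in Iic z, g y)
      = fun z => (∫ y in Iic (0:ℝ), g y) + ∫ y in (0:ℝ)..z, g y := by
    funext z
    rw [← intervalIntegral.integral_Iic_sub_Iic (hgi 0) (hgi z)]
    ring
  rw [hrepr]
  exact ((intervalIntegral.integral_hasDerivAt_right (hg.intervalIntegrable _ _)
    (hg.stronglyMeasurableAtFilter _ _) hg.continuousAt)).const_add _

theorem statement0 (K : ℝ → ℝ) (θ cf : ℝ)
    (hK : Continuous K)
    (hKdecay : ∃ α > (0:ℝ), ∃ ρ > (0:ℝ), ∀ x : ℝ, |K x| ≤ α * Real.exp (-ρ * |x|))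
    (hKint : (∫ x : ℝ, K x) = 1)
    (hθ : 0 < θ) (hcf : 0 < cf)
    (hroot : phiF K cf = θ)
    (hsub : ∀ z < 0, Uf K cf z < θ) :
    (∀ c : ℝ, 0 < c → c < cf → θ < phiF K c) ∧
    (∀ c : ℝ, cf < c → phiF K c < θ) ∧
    (∀ c : ℝ, 0 < c → phiF K c = θ → c = cf) := by
  classical
  obtain ⟨α, hα, ρ, hρ, hKbd⟩ := hKdecay
  have hKi : Integrable K := Kintegrable hK ⟨α, hα, ρ, hρ, hKbd⟩
  set F : ℝ → ℝ := fun z => ∫ y in Iic z, K y with hF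
  have hFx : ∀ x : ℝ, (∫ y in Iic x, K y) = F x := fun _ => rfl
  set M : ℝ := ∫ y, |K y| with hM
  have hFbd : ∀ x, |F x| ≤ M := by
    intro x
    calc |F x| ≤ ∫ y in Iic x, |K y| := by
          simpa using norm_integral_le_integral_norm (μ := volume.restrict (Iic x)) K
      _ ≤ M := setIntegral_le_integral hKi.abs (Eventually.of_forall fun y => abs_nonneg _)
  have hFd : ∀ x, HasDerivAt F (K x) x := primdiff hK (fun _ => hKi.integrableOn)
  have hFcont : Continuous F := continuous_iff_continuousAt.2 fun x => (hFd x).continuousAt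
  have hM0 : 0 ≤ M := integral_nonneg fun y => abs_nonneg _
  have hb0 : 0 < 1/cf := by positivity
  -- the function Bg = e^{x/cf} F x and its primitive B
  set Bg : ℝ → ℝ := fun x => Real.exp ((1/cf) * x) * F x with hBgdef
  have hBgcont : Continuous Bg :=
    (Real.continuous_exp.comp (continuous_const.mul continuous_id)).mul hFcont
  have hBgbd : ∀ x, |Bg x| ≤ M * Real.exp ((1/cf) * x) := by
    intro x
    rw [hBgdef]
    calc |Real.exp ((1/cf) * x) * F x| = Real.exp ((1/cf) * x) * |F x| := by
          rw [abs_mul, abs_of_nonneg (Real.exp_pos _).le]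
      _ ≤ Real.exp ((1/cf) * x) * M :=
          mul_le_mul_of_nonneg_left (hFbd x) (Real.exp_pos _).le
      _ = M * Real.exp ((1/cf) * x) := mul_comm _ _
  have hBgint : ∀ a, IntegrableOn Bg (Iic a) := fun a =>
    intOn_of_bound M hb0 hBgcont.aestronglyMeasurable.restrict (fun x _ => hBgbd x)
  set B : ℝ → ℝ := fun z => ∫ x in Iic z, Bg x with hB
  have hBx : ∀ z : ℝ, (∫ x in Iic z, Bg x) = B z := fun _ => rfl
  have hBd : ∀ x, HasDerivAt B (Bg x) x := primdiff hBgcont hBgint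
  have hBcont : Continuous B := continuous_iff_continuousAt.2 fun x => (hBd x).continuousAt
  have hBbd : ∀ z, |B z| ≤ (M * cf) * Real.exp ((1/cf) * z) := by
    intro z
    calc |B z| ≤ ∫ x in Iic z, |Bg x| := by
          simpa using norm_integral_le_integral_norm (μ := volume.restrict (Iic z)) Bg
      _ ≤ ∫ x in Iic z, M * Real.exp ((1/cf) * x) :=
          integral_mono (hBgint z).abs ((expIic hb0 z).const_mul M) (fun x => hBgbd x)
      _ = (M * cf) * Real.exp ((1/cf) * z) := by
          rw [MeasureTheory.integral_const_mul, integral_expIic hb0 z]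
          field_simp
  -- the basic formula for phiF
  have hphi : ∀ c : ℝ, 0 < c →
      phiF K c = (1/c) * ∫ x in Iic (0:ℝ), Real.exp ((1/c) * x) * F x := by
    intro c hc
    have hb : 0 < 1/c := by positivity
    have hKint' : IntegrableOn (fun x => Real.exp ((1/c)*x) * K x) (Iic 0) := by
      refine intOn_of_bound α hb
        ((Real.continuous_exp.comp (continuous_const.mul continuous_id)).mul
          hK).aestronglyMeasurable.restrict (fun x _ => ?_)
      have h1 : |K x| ≤ α := by
        have := hKbd x
        nlinarith [Real.exp_le_one_iff.2 (by nlinarith [abs_nonneg x] : -ρ * |x| ≤ 0)]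
      calc |Real.exp ((1/c)*x) * K x| = Real.exp ((1/c)*x) * |K x| := by
            rw [abs_mul, abs_of_nonneg (Real.exp_pos _).le]
        _ ≤ Real.exp ((1/c)*x) * α := mul_le_mul_of_nonneg_left h1 (Real.exp_pos _).le
        _ = α * Real.exp ((1/c)*x) := mul_comm _ _
    have hFint' : IntegrableOn (fun x => Real.exp ((1/c)*x) * F x) (Iic 0) := by
      refine intOn_of_bound M hb
        ((Real.continuous_exp.comp (continuous_const.mul continuous_id)).mul
          hFcont).aestronglyMeasurable.restrict (fun x _ => ?_)
      calc |Real.exp ((1/c)*x) * F x| = Real.exp ((1/c)*x) * |F x| := by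
            rw [abs_mul, abs_of_nonneg (Real.exp_pos _).le]
        _ ≤ Real.exp ((1/c)*x) * M := mul_le_mul_of_nonneg_left (hFbd x) (Real.exp_pos _).le
        _ = M * Real.exp ((1/c)*x) := mul_comm _ _
    have hlim : Tendsto (fun x => Real.exp ((1/c)*x) * F x) atBot (𝓝 0) := by
      refine squeeze_zero_norm (a := fun x => M * Real.exp ((1/c)*x)) (fun x => ?_) ?_
      · show |Real.exp ((1/c)*x) * F x| ≤ M * Real.exp ((1/c)*x)
        rw [abs_mul, abs_of_nonneg (Real.exp_pos _).le]
        calc Real.exp ((1/c)*x) * |F x| ≤ Real.exp ((1/c)*x) * M :=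
              mul_le_mul_of_nonneg_left (hFbd x) (Real.exp_pos _).le
          _ = M * Real.exp ((1/c)*x) := mul_comm _ _
      · simpa using (exp_tendsto_bot hb).const_mul M
    have hIBP := ibp F K (1/c) hFd hKint' hFint' hlim
    rw [phiF, setIntegral_congr_set (Iio_ae_eq_Iic (a := (0:ℝ))),
      setIntegral_congr_set (Iio_ae_eq_Iic (a := (0:ℝ)))]
    have hx : (∫ x in Iic (0:ℝ), Real.exp (x/c) * K x)
        = ∫ x in Iic (0:ℝ), Real.exp ((1/c)*x) * K x := by
      refine setIntegral_congr_fun measurableSet_Iic (fun x _ => ?_)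
      rw [show x / c = (1/c) * x by ring]
    rw [hx, hIBP, hFx]
    ring
  -- B 0 = cf * θ
  have hB0 : B 0 = cf * θ := by
    have h := hphi cf hcf
    rw [hroot] at h
    have h2 : B 0 = ∫ x in Iic (0:ℝ), Real.exp ((1/cf)*x) * F x := rfl
    rw [h2, h]
    field_simp
  -- Uf in terms of B
  have hUfB : ∀ z, Uf K cf z = (1/cf) * (Real.exp (-((1/cf)*z)) * B z) := by
    intro z
    rw [Uf]
    congr 1
    rw [← hBx z, ← MeasureTheory.integral_const_mul]
    refine setIntegral_congr_fun measurableSet_Iic (fun x _ => ?_)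
    rw [hFx, hBgdef]
    show Real.exp ((x - z)/cf) * F x = Real.exp (-((1/cf)*z)) * (Real.exp ((1/cf)*x) * F x)
    rw [← mul_assoc, ← Real.exp_add]
    congr 2
    ring
  have hBlt : ∀ z, z < 0 → B z < (cf*θ) * Real.exp ((1/cf) * z) := by
    intro z hz
    have h := hsub z hz
    rw [hUfB z] at h
    have he : 0 < Real.exp (-((1/cf)*z)) := Real.exp_pos _
    have hid : B z = Real.exp ((1/cf)*z) * (Real.exp (-((1/cf)*z)) * B z) := by
      rw [← mul_assoc, ← Real.exp_add]
      simp
    rw [hid]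
    have h2 : Real.exp (-((1/cf)*z)) * B z < cf * θ := by
      have := mul_lt_mul_of_pos_left h hcf
      calc Real.exp (-((1/cf)*z)) * B z
          = cf * ((1/cf) * (Real.exp (-((1/cf)*z)) * B z)) := by field_simp
        _ < cf * θ := this
    calc Real.exp ((1/cf)*z) * (Real.exp (-((1/cf)*z)) * B z)
        < Real.exp ((1/cf)*z) * (cf * θ) := by
          exact mul_lt_mul_of_pos_left h2 (Real.exp_pos _)
      _ = (cf*θ) * Real.exp ((1/cf)*z) := by ring
  have hBle : ∀ z, z ≤ 0 → B z ≤ (cf*θ) * Real.exp ((1/cf) * z) := by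
    intro z hz
    rcases lt_or_eq_of_le hz with h | h
    · exact (hBlt z h).le
    · rw [h, hB0]; simp
  -- central comparison
  have core : ∀ c : ℝ, 0 < c → ((c < cf → θ < phiF K c) ∧ (cf < c → phiF K c < θ)) := by
    intro c hc
    have hbc : 0 < 1/c := by positivity
    have hdb : ∀ x : ℝ, Real.exp ((1/c - 1/cf)*x) * Real.exp ((1/cf)*x)
        = Real.exp ((1/c)*x) := by
      intro x; rw [← Real.exp_add]; congr 1; ring
    have hdBbd : ∀ x : ℝ, |Real.exp ((1/c - 1/cf)*x) * B x| ≤ (M*cf) * Real.exp ((1/c)*x) := by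
      intro x
      rw [abs_mul, abs_of_nonneg (Real.exp_pos _).le]
      calc Real.exp ((1/c - 1/cf)*x) * |B x|
          ≤ Real.exp ((1/c - 1/cf)*x) * ((M*cf) * Real.exp ((1/cf)*x)) :=
            mul_le_mul_of_nonneg_left (hBbd x) (Real.exp_pos _).le
        _ = (M*cf) * (Real.exp ((1/c - 1/cf)*x) * Real.exp ((1/cf)*x)) := by ring
        _ = (M*cf) * Real.exp ((1/c)*x) := by rw [hdb]
    have hJint : IntegrableOn (fun x => Real.exp ((1/c - 1/cf)*x) * B x) (Iic 0) := by
      refine intOn_of_bound (M*cf) hbc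
        ((Real.continuous_exp.comp (continuous_const.mul continuous_id)).mul
          hBcont).aestronglyMeasurable.restrict (fun x _ => hdBbd x)
    set J : ℝ := ∫ x in Iic (0:ℝ), Real.exp ((1/c - 1/cf)*x) * B x with hJ
    have hFintc : IntegrableOn (fun x => Real.exp ((1/c)*x) * F x) (Iic 0) := by
      refine intOn_of_bound M hbc
        ((Real.continuous_exp.comp (continuous_const.mul continuous_id)).mul
          hFcont).aestronglyMeasurable.restrict (fun x _ => ?_)
      rw [abs_mul, abs_of_nonneg (Real.exp_pos _).le]
      calc Real.exp ((1/c)*x) * |F x| ≤ Real.exp ((1/c)*x) * M :=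
            mul_le_mul_of_nonneg_left (hFbd x) (Real.exp_pos _).le
        _ = M * Real.exp ((1/c)*x) := mul_comm _ _
    have hgint' : IntegrableOn (fun x => Real.exp ((1/c - 1/cf)*x) * Bg x) (Iic 0) := by
      refine hFintc.congr_fun (fun x _ => ?_) measurableSet_Iic
      rw [hBgdef]
      show Real.exp ((1/c)*x) * F x = Real.exp ((1/c - 1/cf)*x) * (Real.exp ((1/cf)*x) * F x)
      rw [← mul_assoc, hdb]
    have hlim' : Tendsto (fun x => Real.exp ((1/c - 1/cf)*x) * B x) atBot (𝓝 0) := by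
      refine squeeze_zero_norm (a := fun x => (M*cf) * Real.exp ((1/c)*x)) (fun x => hdBbd x) ?_
      simpa using (exp_tendsto_bot hbc).const_mul (M*cf)
    have hIBP2 : (∫ x in Iic (0:ℝ), Real.exp ((1/c)*x) * F x)
        = B 0 - (1/c - 1/cf) * J := by
      have h := ibp B Bg (1/c - 1/cf) hBd hgint' hJint hlim'
      rw [← h]
      refine setIntegral_congr_fun measurableSet_Iic (fun x _ => ?_)
      rw [hBgdef]
      show Real.exp ((1/c)*x) * F x = Real.exp ((1/c - 1/cf)*x) * (Real.exp ((1/cf)*x) * F x)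
      rw [← mul_assoc, hdb]
    -- strict bound on J
    have hJlt : J < θ * cf * c := by
      set g : ℝ → ℝ := fun x => (cf*θ) * Real.exp ((1/c)*x) with hg
      have hgint2 : IntegrableOn g (Iic 0) := (expIic hbc 0).const_mul (cf*θ)
      have hfle : ∀ x ∈ Iic (0:ℝ), Real.exp ((1/c - 1/cf)*x) * B x ≤ g x := by
        intro x hx
        rw [hg]
        calc Real.exp ((1/c - 1/cf)*x) * B x
            ≤ Real.exp ((1/c - 1/cf)*x) * ((cf*θ) * Real.exp ((1/cf)*x)) :=
              mul_le_mul_of_nonneg_left (hBle x hx) (Real.exp_pos _).le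
          _ = (cf*θ) * (Real.exp ((1/c - 1/cf)*x) * Real.exp ((1/cf)*x)) := by ring
          _ = (cf*θ) * Real.exp ((1/c)*x) := by rw [hdb]
      have hflt : ∀ x ∈ Iio (0:ℝ), Real.exp ((1/c - 1/cf)*x) * B x < g x := by
        intro x hx
        rw [hg]
        calc Real.exp ((1/c - 1/cf)*x) * B x
            < Real.exp ((1/c - 1/cf)*x) * ((cf*θ) * Real.exp ((1/cf)*x)) :=
              mul_lt_mul_of_pos_left (hBlt x hx) (Real.exp_pos _)
          _ = (cf*θ) * (Real.exp ((1/c - 1/cf)*x) * Real.exp ((1/cf)*x)) := by ring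
          _ = (cf*θ) * Real.exp ((1/c)*x) := by rw [hdb]
      -- positivity of the integral of the difference
      have hdiffint : Integrable (fun x => g x - Real.exp ((1/c - 1/cf)*x) * B x)
          (volume.restrict (Iic 0)) := hgint2.sub hJint
      have hpos : 0 < ∫ x in Iic (0:ℝ), (g x - Real.exp ((1/c - 1/cf)*x) * B x) := by
        rw [integral_pos_iff_support_of_nonneg_ae ?_ hdiffint]
        · refine lt_of_lt_of_le ?_ (measure_mono (?_ :
            Iio (0:ℝ) ⊆ Function.support fun x => g x - Real.exp ((1/c - 1/cf)*x) * B x))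
          · rw [Measure.restrict_apply measurableSet_Iio,
              inter_eq_self_of_subset_left Iio_subset_Iic_self, Real.volume_Iio]
            exact ENNReal.zero_lt_top
          · intro x hx
            exact sub_ne_zero_of_ne (ne_of_gt (hflt x hx))
        · refine (ae_restrict_iff' measurableSet_Iic).2 (Eventually.of_forall ?_)
          intro x hx
          exact sub_nonneg.2 (hfle x hx)
      have hsplit : (∫ x in Iic (0:ℝ), (g x - Real.exp ((1/c - 1/cf)*x) * B x))
          = (∫ x in Iic (0:ℝ), g x) - J := integral_sub hgint2 hJint
      have hgval : (∫ x in Iic (0:ℝ), g x) = θ * cf * c := by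
        simp only [hg]
        rw [MeasureTheory.integral_const_mul, integral_expIic hbc 0, mul_zero, Real.exp_zero,
          one_div_one_div]
        ring
      rw [hsplit, hgval] at hpos
      linarith
    -- final algebra
    have hphic := hphi c hc
    rw [hIBP2, hB0] at hphic
    have hkey : phiF K c - θ = ((cf - c)/(c*c*cf)) * (θ*cf*c - J) := by
      rw [hphic]
      field_simp
      ring
    constructor
    · intro hlt
      have h1 : 0 < (cf - c)/(c*c*cf) := div_pos (by linarith) (by positivity)
      nlinarith
    · intro hlt
      have h1 : (cf - c)/(c*c*cf) < 0 := by
        apply div_neg_of_neg_of_pos (by linarith) (by positivity)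
      nlinarith
  refine ⟨fun c hc hlt => (core c hc).1 hlt, fun c hlt => (core c (hcf.trans hlt)).2 hlt,
    fun c hc heq => ?_⟩
  rcases lt_trichotomy c cf with h | h | h
  · exact absurd heq (by have := (core c hc).1 h; linarith)
  · exact h
  · exact absurd heq (by have := (core c hc).2 h; linarith)
end

section
/- Suppose c_f > 0 satisfies φ_f(c_f) = θ. Then for every λ > −1 the identity φ_f(c_f/(λ+1)) = (λ+1)·( θ − (λ/c_f) ∫_{−∞}^0 e^{(λ+1)x/c_f} U_f(x) dx ) holds. -/
open MeasureTheory Real Filter Set Topology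

lemma exp_mul_indicator (s x : ℝ) (hs : 0 < s) :
    (Iic x).indicator (fun y => Real.exp (s*y)) = fun y => (Iic (s*x)).indicator Real.exp (s*y) := by
  funext y
  by_cases hy : y ≤ x
  · simp [indicator, hy, mul_le_mul_of_nonneg_left hy hs.le]
  · have : ¬ (s*y ≤ s*x) := by
      exact fun h => hy (le_of_mul_le_mul_left h hs)
    simp [indicator, hy, this]

lemma exp_integrableOn_Iic {s : ℝ} (hs : 0 < s) (x : ℝ) :
    IntegrableOn (fun y => Real.exp (s*y)) (Iic x) := by
  rw [← integrable_indicator_iff measurableSet_Iic, exp_mul_indicator s x hs]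
  exact ((integrableOn_exp_Iic (s*x)).integrable_indicator measurableSet_Iic).comp_mul_left' hs.ne'

lemma integral_exp_mul_Iic' {s : ℝ} (hs : 0 < s) (x : ℝ) :
    (∫ y in Iic x, Real.exp (s*y)) = Real.exp (s*x) / s := by
  rw [← integral_indicator measurableSet_Iic, exp_mul_indicator s x hs,
    MeasureTheory.Measure.integral_comp_mul_left (fun y => (Iic (s*x)).indicator Real.exp y) s,
    integral_indicator measurableSet_Iic, integral_exp_Iic]
  rw [abs_of_pos (inv_pos.mpr hs)]
  simp [div_eq_inv_mul]

lemma integral_exp_mul_Ico {a y : ℝ} (ha : a ≠ 0) (hy : y ≤ 0) :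
    (∫ x in Ico y 0, Real.exp (a*x)) = (1 - Real.exp (a*y)) / a := by
  rw [setIntegral_congr_set Ico_ae_eq_Ioc, ← intervalIntegral.integral_of_le hy,
    intervalIntegral.integral_comp_mul_left Real.exp ha]
  rw [integral_exp]
  rw [mul_zero, Real.exp_zero, smul_eq_mul]
  ring

lemma integrable_of_expdecay {f : ℝ → ℝ} (hf : Continuous f) {α ρ : ℝ} (hρ : 0 < ρ)
    (hb : ∀ x, |f x| ≤ α * Real.exp (-ρ * |x|)) : Integrable f := by
  rw [← integrableOn_univ, ← Set.Iic_union_Ioi (a := (0:ℝ))]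
  apply IntegrableOn.union
  · apply Integrable.mono' (((exp_integrableOn_Iic hρ 0).const_mul α))
      hf.aestronglyMeasurable.restrict
    filter_upwards [ae_restrict_mem measurableSet_Iic] with x hx
    have h2 : -ρ * |x| = ρ * x := by rw [abs_of_nonpos (mem_Iic.mp hx)]; ring
    have := hb x
    rwa [h2, ← Real.norm_eq_abs] at this
  · apply Integrable.mono' (((exp_neg_integrableOn_Ioi 0 hρ).const_mul α))
      hf.aestronglyMeasurable.restrict
    filter_upwards [ae_restrict_mem measurableSet_Ioi] with x hx
    have h2 : -ρ * |x| = -ρ * x := by rw [abs_of_pos (mem_Ioi.mp hx)]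
    have := hb x
    rwa [h2, ← Real.norm_eq_abs] at this
lemma int_h_Iic {h : ℝ → ℝ} (hh : Continuous h) {C s : ℝ} (hs : 0 < s)
    (hb : ∀ y ≤ 0, |h y| ≤ C * Real.exp (s*y)) {x : ℝ} (hx : x ≤ 0) :
    IntegrableOn h (Iic x) := by
  apply Integrable.mono' ((exp_integrableOn_Iic hs x).const_mul C)
    hh.aestronglyMeasurable.restrict
  filter_upwards [ae_restrict_mem measurableSet_Iic] with y hy
  rw [Real.norm_eq_abs]
  exact hb y ((mem_Iic.mp hy).trans hx)

lemma int_exp_h_Iio {h : ℝ → ℝ} (hh : Continuous h) {C s : ℝ} (hs : 0 < s)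
    (hb : ∀ y ≤ 0, |h y| ≤ C * Real.exp (s*y)) {a : ℝ} (has : 0 < a + s) :
    IntegrableOn (fun y => Real.exp (a*y) * h y) (Iio 0) := by
  refine Integrable.mono'
    (((exp_integrableOn_Iic has 0).mono_set Iio_subset_Iic_self).const_mul C)
    ?_ ?_
  · exact (((Real.continuous_exp.comp (continuous_const.mul continuous_id)).mul
      hh).aestronglyMeasurable).restrict
  filter_upwards [ae_restrict_mem measurableSet_Iio] with y hy
  have hy0 : y ≤ 0 := le_of_lt hy
  have h1 : ‖Real.exp (a*y) * h y‖ = Real.exp (a*y) * |h y| := by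
    rw [norm_mul, Real.norm_eq_abs, Real.norm_eq_abs, abs_of_pos (Real.exp_pos _)]
  rw [h1]
  calc Real.exp (a*y) * |h y| ≤ Real.exp (a*y) * (C * Real.exp (s*y)) :=
        mul_le_mul_of_nonneg_left (hb y hy0) (Real.exp_pos _).le
    _ = C * Real.exp ((a+s)*y) := by rw [add_mul, Real.exp_add]; ring

lemma swap_core {h : ℝ → ℝ} (hh : Continuous h) {C s : ℝ} (hs : 0 < s)
    (hb : ∀ y ≤ 0, |h y| ≤ C * Real.exp (s*y)) {a : ℝ} (has : 0 < a + s) :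
    (∫ x in Iio (0:ℝ), Real.exp (a*x) * ∫ y in Iic x, h y)
      = ∫ y in Iio (0:ℝ), (∫ x in Ico y 0, Real.exp (a*x)) * h y := by
  set Φ : ℝ → ℝ → ℝ := fun x y => (Iic x).indicator (fun t => Real.exp (a*x) * h t) y with hΦ
  have hmeas : AEStronglyMeasurable (Function.uncurry Φ)
      ((volume.restrict (Iio (0:ℝ))).prod (volume.restrict (Iio (0:ℝ)))) := by
    have hset : MeasurableSet {p : ℝ × ℝ | p.2 ≤ p.1} :=
      (isClosed_le continuous_snd continuous_fst).measurableSet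
    have hcont : Continuous fun p : ℝ × ℝ => Real.exp (a*p.1) * h p.2 :=
      (Real.continuous_exp.comp (continuous_const.mul continuous_fst)).mul (hh.comp continuous_snd)
    have heq : Function.uncurry Φ
        = {p : ℝ × ℝ | p.2 ≤ p.1}.indicator (fun p => Real.exp (a*p.1) * h p.2) := by
      funext p
      by_cases hp : p.2 ≤ p.1 <;>
        simp [Φ, Function.uncurry, Set.indicator, hp]
    rw [heq]
    exact (hcont.stronglyMeasurable.indicator hset).aestronglyMeasurable
  have hIic : ∀ x : ℝ, x < 0 → Iio (0:ℝ) ∩ Iic x = Iic x := fun x hx =>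
    inter_eq_self_of_subset_right (Iic_subset_Iio.mpr hx)
  have hint_inner : ∀ x : ℝ, x < 0 → Integrable (Φ x) (volume.restrict (Iio (0:ℝ))) := by
    intro x hx
    exact (MeasureTheory.IntegrableOn.integrable_indicator
      ((int_h_Iic hh hs hb hx.le).const_mul (Real.exp (a*x))) measurableSet_Iic).integrableOn
  have hprod : Integrable (Function.uncurry Φ)
      ((volume.restrict (Iio (0:ℝ))).prod (volume.restrict (Iio (0:ℝ)))) := by
    rw [integrable_prod_iff hmeas]
    constructor
    · filter_upwards [ae_restrict_mem measurableSet_Iio] with x hx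
      exact hint_inner x hx
    · apply Integrable.mono'
        (g := fun x => (C/s) * Real.exp ((a+s)*x))
        (((exp_integrableOn_Iic has 0).mono_set Iio_subset_Iic_self).const_mul (C/s))
        (hmeas.norm.integral_prod_right')
      filter_upwards [ae_restrict_mem measurableSet_Iio] with x hx
      have hx0 : x ≤ 0 := hx.le
      have h1 : (∫ y in Iio (0:ℝ), ‖Φ x y‖) = ∫ y in Iic x, ‖Real.exp (a*x) * h y‖ := by
        simp_rw [Φ, norm_indicator_eq_indicator_norm]
        rw [setIntegral_indicator measurableSet_Iic, hIic x hx]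
      have h2 : (∫ y in Iic x, ‖Real.exp (a*x) * h y‖)
          ≤ ∫ y in Iic x, Real.exp (a*x) * (C * Real.exp (s*y)) := by
        apply setIntegral_mono_on
        · exact ((int_h_Iic hh hs hb hx0).const_mul _).norm
        · exact ((exp_integrableOn_Iic hs x).const_mul C).const_mul _
        · exact measurableSet_Iic
        · intro y hy
          rw [norm_mul, Real.norm_eq_abs, Real.norm_eq_abs, abs_of_pos (Real.exp_pos _)]
          exact mul_le_mul_of_nonneg_left (hb y ((mem_Iic.mp hy).trans hx0)) (Real.exp_pos _).le
      have h3 : (∫ y in Iic x, Real.exp (a*x) * (C * Real.exp (s*y)))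
          = (C/s) * Real.exp ((a+s)*x) := by
        rw [integral_const_mul, integral_const_mul, integral_exp_mul_Iic' hs, add_mul,
          Real.exp_add]
        ring
      have h4 : ‖∫ y in Iio (0:ℝ), ‖Φ x y‖‖ = ∫ y in Iio (0:ℝ), ‖Φ x y‖ := by
        rw [Real.norm_eq_abs, abs_of_nonneg (integral_nonneg fun y => norm_nonneg _)]
      simp only [Function.uncurry_apply_pair]
      rw [h4, h1]
      exact h2.trans (le_of_eq h3)
  have hswap := integral_integral_swap hprod
  have hL : (∫ x in Iio (0:ℝ), ∫ y in Iio (0:ℝ), Φ x y)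
      = ∫ x in Iio (0:ℝ), Real.exp (a*x) * ∫ y in Iic x, h y := by
    apply setIntegral_congr_fun measurableSet_Iio
    intro x hx
    simp only [hΦ]
    rw [setIntegral_indicator measurableSet_Iic, hIic x hx, integral_const_mul]
  have hR : (∫ y in Iio (0:ℝ), ∫ x in Iio (0:ℝ), Φ x y)
      = ∫ y in Iio (0:ℝ), (∫ x in Ico y 0, Real.exp (a*x)) * h y := by
    apply setIntegral_congr_fun measurableSet_Iio
    intro y hy
    simp only [hΦ]
    have hfun : (fun x => (Iic x).indicator (fun t => Real.exp (a*x) * h t) y)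
        = (Ici y).indicator (fun x => Real.exp (a*x) * h y) := by
      funext x
      by_cases hxy : y ≤ x <;> simp [Set.indicator, hxy]
    rw [hfun, setIntegral_indicator measurableSet_Ici,
      show Iio (0:ℝ) ∩ Ici y = Ico y 0 from by rw [inter_comm]; exact Ici_inter_Iio,
      integral_mul_const]
  rw [← hL, hswap, hR]
lemma key {h : ℝ → ℝ} (hh : Continuous h) {C s : ℝ} (hs : 0 < s)
    (hb : ∀ y ≤ 0, |h y| ≤ C * Real.exp (s*y)) {a : ℝ} (ha : a ≠ 0) (has : 0 < a + s) :
    (∫ x in Iio (0:ℝ), Real.exp (a*x) * ∫ y in Iic x, h y)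
      = (1/a) * ((∫ y in Iio (0:ℝ), h y) - ∫ y in Iio (0:ℝ), Real.exp (a*y) * h y) := by
  rw [swap_core hh hs hb has]
  have h2 : (∫ y in Iio (0:ℝ), (∫ x in Ico y 0, Real.exp (a*x)) * h y)
      = ∫ y in Iio (0:ℝ), (1/a) * (h y - Real.exp (a*y) * h y) := by
    apply setIntegral_congr_fun measurableSet_Iio
    intro y hy
    show (∫ x in Ico y 0, Real.exp (a*x)) * h y = (1/a) * (h y - Real.exp (a*y) * h y)
    rw [integral_exp_mul_Ico ha (le_of_lt hy)]
    ring
  have hint1 : IntegrableOn h (Iio (0:ℝ)) :=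
    (int_h_Iic hh hs hb le_rfl).mono_set Iio_subset_Iic_self
  have hint2 : IntegrableOn (fun y => Real.exp (a*y) * h y) (Iio (0:ℝ)) :=
    int_exp_h_Iio hh hs hb has
  rw [h2, integral_const_mul, integral_sub hint1 hint2]
open intervalIntegral in
lemma Iic_primitive_eq {f : ℝ → ℝ} (hf : Integrable f) (x : ℝ) :
    (∫ y in Iic x, f y) = (∫ y in Iic (0:ℝ), f y) + ∫ y in (0:ℝ)..x, f y := by
  rw [← integral_Iic_sub_Iic hf.integrableOn hf.integrableOn]
  ring

theorem statement1 (K : ℝ → ℝ) (θ cf : ℝ)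
    (hK : Continuous K)
    (hKdecay : ∃ α > (0:ℝ), ∃ ρ > (0:ℝ), ∀ x : ℝ, |K x| ≤ α * Real.exp (-ρ * |x|))
    (hKint : (∫ x : ℝ, K x) = 1)
    (hθ : 0 < θ) (hcf : 0 < cf)
    (hroot : phiF K cf = θ) :
    ∀ lam : ℝ, -1 < lam →
      phiF K (cf / (lam + 1)) =
        (lam + 1) * (θ - (lam / cf) *
          ∫ x in Iio (0:ℝ), Real.exp ((lam + 1) * x / cf) * Uf K cf x) := by
  obtain ⟨α, hα, ρ, hρ, hbK⟩ := hKdecay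
  have hKb : ∀ y : ℝ, y ≤ 0 → |K y| ≤ α * Real.exp (ρ*y) := by
    intro y hy
    have h2 : -ρ * |y| = ρ * y := by rw [abs_of_nonpos hy]; ring
    have := hbK y; rwa [h2] at this
  have hKint' : Integrable K := integrable_of_expdecay hK hρ hbK
  have hFcont : Continuous (fun x : ℝ => ∫ y in Iic x, K y) := by
    have heq : (fun x : ℝ => ∫ y in Iic x, K y)
        = fun x : ℝ => (∫ y in Iic (0:ℝ), K y) + ∫ y in (0:ℝ)..x, K y := by
      funext x
      exact Iic_primitive_eq hKint' x
    rw [heq]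
    exact continuous_const.add (hKint'.continuous_primitive 0)
  have hFb : ∀ x : ℝ, x ≤ 0 → |∫ y in Iic x, K y| ≤ (α/ρ) * Real.exp (ρ*x) := by
    intro x hx
    have h1 : ‖∫ y in Iic x, K y‖ ≤ ∫ y in Iic x, α * Real.exp (ρ*y) := by
      apply norm_integral_le_of_norm_le ((exp_integrableOn_Iic hρ x).const_mul α)
      filter_upwards [ae_restrict_mem measurableSet_Iic] with y hy
      rw [Real.norm_eq_abs]
      exact hKb y ((mem_Iic.mp hy).trans hx)
    rw [Real.norm_eq_abs, integral_const_mul, integral_exp_mul_Iic' hρ] at h1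
    calc |∫ y in Iic x, K y| ≤ α * (Real.exp (ρ*x)/ρ) := h1
      _ = (α/ρ) * Real.exp (ρ*x) := by ring
  have key1 : ∀ m : ℝ, 0 < m →
      (∫ x in Iio (0:ℝ), Real.exp (m*x) * ∫ y in Iic x, K y)
        = (1/m) * ((∫ y in Iio (0:ℝ), K y) - ∫ y in Iio (0:ℝ), Real.exp (m*y) * K y) :=
    fun m hm => key hK hρ hKb hm.ne' (by linarith)
  intro lam hlam
  by_cases hlam0 : lam = 0
  · subst hlam0
    norm_num [hroot]
  have hcf' : cf ≠ 0 := hcf.ne'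
  have hl1pos : 0 < lam + 1 := by linarith
  have hl1 : lam + 1 ≠ 0 := hl1pos.ne'
  have hμ : 0 < (lam+1)/cf := div_pos hl1pos hcf
  have hh₂c : Continuous (fun t : ℝ => Real.exp ((1/cf)*t) * ∫ y in Iic t, K y) :=
    (Real.continuous_exp.comp (continuous_const.mul continuous_id)).mul hFcont
  have hs₂ : 0 < 1/cf + ρ := by positivity
  have hb₂ : ∀ y : ℝ, y ≤ 0 →
      |Real.exp ((1/cf)*y) * ∫ t in Iic y, K t| ≤ (α/ρ) * Real.exp ((1/cf + ρ)*y) := by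
    intro y hy
    rw [abs_mul, abs_of_pos (Real.exp_pos _)]
    calc Real.exp ((1/cf)*y) * |∫ t in Iic y, K t|
        ≤ Real.exp ((1/cf)*y) * ((α/ρ) * Real.exp (ρ*y)) :=
          mul_le_mul_of_nonneg_left (hFb y hy) (Real.exp_pos _).le
      _ = (α/ρ) * Real.exp ((1/cf + ρ)*y) := by rw [add_mul, Real.exp_add]; ring
  have ha2 : lam/cf ≠ 0 := div_ne_zero hlam0 hcf'
  have has2 : 0 < lam/cf + (1/cf + ρ) := by
    have hq : lam/cf + (1/cf + ρ) = (lam+1)/cf + ρ := by field_simp; ring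
    rw [hq]; positivity
  have key2 :
      (∫ x in Iio (0:ℝ), Real.exp ((lam/cf)*x)
          * ∫ t in Iic x, Real.exp ((1/cf)*t) * ∫ y in Iic t, K y)
        = (1/(lam/cf)) * ((∫ y in Iio (0:ℝ), Real.exp ((1/cf)*y) * ∫ t in Iic y, K t)
            - ∫ y in Iio (0:ℝ), Real.exp ((lam/cf)*y)
                * (Real.exp ((1/cf)*y) * ∫ t in Iic y, K t)) :=
    key hh₂c hs₂ hb₂ ha2 has2
  -- merge exponentials in the last integral of key2
  have hP2 : (∫ y in Iio (0:ℝ), Real.exp ((lam/cf)*y) * (Real.exp ((1/cf)*y) * ∫ t in Iic y, K t))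
      = ∫ y in Iio (0:ℝ), Real.exp (((lam+1)/cf)*y) * ∫ t in Iic y, K t := by
    apply setIntegral_congr_fun measurableSet_Iio
    intro y hy
    show Real.exp ((lam/cf)*y) * (Real.exp ((1/cf)*y) * ∫ t in Iic y, K t)
        = Real.exp (((lam+1)/cf)*y) * ∫ t in Iic y, K t
    rw [← mul_assoc, ← Real.exp_add]
    have : lam/cf*y + 1/cf*y = (lam+1)/cf*y := by field_simp
    rw [this]
  -- rewrite the Uf-integral
  have hIeq : (∫ x in Iio (0:ℝ), Real.exp ((lam + 1) * x / cf) * Uf K cf x)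
      = (1/cf) * ∫ x in Iio (0:ℝ), Real.exp ((lam/cf)*x)
          * ∫ t in Iic x, Real.exp ((1/cf)*t) * ∫ y in Iic t, K y := by
    rw [← integral_const_mul]
    apply setIntegral_congr_fun measurableSet_Iio
    intro x hx
    show Real.exp ((lam + 1) * x / cf) * Uf K cf x
        = (1/cf) * (Real.exp ((lam/cf)*x) * ∫ t in Iic x, Real.exp ((1/cf)*t) * ∫ y in Iic t, K y)
    rw [Uf]
    have hinner : (∫ t in Iic x, Real.exp ((t - x)/cf) * ∫ y in Iic t, K y)
        = Real.exp (-((1/cf)*x)) * ∫ t in Iic x, Real.exp ((1/cf)*t) * ∫ y in Iic t, K y := by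
      rw [← integral_const_mul]
      apply setIntegral_congr_fun measurableSet_Iic
      intro t ht
      show Real.exp ((t - x)/cf) * ∫ y in Iic t, K y
          = Real.exp (-((1/cf)*x)) * (Real.exp ((1/cf)*t) * ∫ y in Iic t, K y)
      rw [← mul_assoc, ← Real.exp_add]
      have : -((1/cf)*x) + (1/cf)*t = (t - x)/cf := by field_simp; ring
      rw [this]
    rw [hinner, show Real.exp ((lam + 1) * x / cf)
          * ((1/cf) * (Real.exp (-((1/cf)*x))
            * ∫ t in Iic x, Real.exp ((1/cf)*t) * ∫ y in Iic t, K y))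
        = (1/cf) * ((Real.exp ((lam + 1) * x / cf) * Real.exp (-((1/cf)*x)))
            * ∫ t in Iic x, Real.exp ((1/cf)*t) * ∫ y in Iic t, K y) from by ring,
      ← Real.exp_add,
      show (lam + 1) * x / cf + -((1/cf)*x) = (lam/cf)*x from by field_simp; ring]
  -- rewrite phiF in goal and hroot
  have e1 : (∫ x in Iio (0:ℝ), Real.exp (x/cf) * K x)
      = ∫ x in Iio (0:ℝ), Real.exp ((1/cf)*x) * K x := by
    apply setIntegral_congr_fun measurableSet_Iio
    intro x hx
    show Real.exp (x/cf) * K x = Real.exp ((1/cf)*x) * K x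
    rw [show x/cf = (1/cf)*x from by ring]
  have e2 : (∫ x in Iio (0:ℝ), Real.exp (x/(cf/(lam+1))) * K x)
      = ∫ x in Iio (0:ℝ), Real.exp (((lam+1)/cf)*x) * K x := by
    apply setIntegral_congr_fun measurableSet_Iio
    intro x hx
    show Real.exp (x/(cf/(lam+1))) * K x = Real.exp (((lam+1)/cf)*x) * K x
    rw [show x/(cf/(lam+1)) = ((lam+1)/cf)*x from by field_simp]
  have hθ' : θ = (∫ y in Iio (0:ℝ), K y) - ∫ y in Iio (0:ℝ), Real.exp ((1/cf)*y) * K y := by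
    rw [← hroot, phiF, e1]
  have hG1 := key1 (1/cf) (by positivity)
  have hGm := key1 ((lam+1)/cf) hμ
  rw [phiF, e2, hθ', hIeq, key2, hP2, hG1, hGm]
  field_simp
  ring
end

section
/- The function φ_f is differentiable at every c > 0 with derivative φ_f'(c) = (1/c²) ∫_{−∞}^0 x e^{x/c} K(x) dx. Moreover, if c_f > 0 satisfies φ_f(c_f) = θ and U_f(z) < θ for all z < 0, then φ_f'(c_f) = −(1/c_f)·( θ − (1/c_f) ∫_{−∞}^0 e^{x/c_f} U_f(x) dx ) and φ_f'(c_f) < 0. -/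
open MeasureTheory Real Filter Set Topology

lemma myIntervalIntegral_exp_mul {b : ℝ} (hb : b ≠ 0) (y z : ℝ) :
    ∫ s in y..z, Real.exp (b * s) = Real.exp (b * z) / b - Real.exp (b * y) / b := by
  have key : ∀ x : ℝ, HasDerivAt (fun s => Real.exp (b * s) / b) (Real.exp (b * x)) x := by
    intro x
    have h : HasDerivAt (fun s : ℝ => b * s) b x := by
      simpa using (hasDerivAt_id x).const_mul b
    have := (h.exp).div_const b
    simpa [mul_comm, mul_div_assoc, mul_div_cancel_left₀ _ hb] using this
  exact intervalIntegral.integral_eq_sub_of_hasDerivAt (fun x _ => key x)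
    ((Real.continuous_exp.comp (continuous_const.mul continuous_id)).intervalIntegrable _ _)

lemma myIntegrableOn_exp_mul_Iic {b : ℝ} (hb : 0 < b) (z : ℝ) :
    IntegrableOn (fun s => Real.exp (b * s)) (Iic z) := by
  refine integrableOn_Iic_of_intervalIntegral_norm_bounded (Real.exp (b*z)/b) z
    (fun y => ((Real.continuous_exp.comp (continuous_const.mul continuous_id)).intervalIntegrable _ _).1) tendsto_id
    (Eventually.of_forall fun y => ?_)
  simp_rw [norm_of_nonneg (Real.exp_pos _).le, myIntervalIntegral_exp_mul hb.ne', id_eq]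
  have : 0 ≤ Real.exp (b * y) / b := by positivity
  linarith

lemma myIntegral_exp_mul_Iic {b : ℝ} (hb : 0 < b) (z : ℝ) :
    ∫ s in Iic z, Real.exp (b * s) = Real.exp (b * z) / b := by
  refine tendsto_nhds_unique
    (intervalIntegral_tendsto_integral_Iic _ (myIntegrableOn_exp_mul_Iic hb z) tendsto_id) ?_
  simp_rw [myIntervalIntegral_exp_mul hb.ne', id_eq]
  rw [show 𝓝 (Real.exp (b*z)/b) = 𝓝 (Real.exp (b*z)/b - 0/b) by norm_num]
  exact Tendsto.const_sub _ ((Real.tendsto_exp_atBot.comp (by simpa using (tendsto_id (α := ℝ)).const_mul_atBot hb)).div_const b)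

lemma primCont {f : ℝ → ℝ} (hf : Continuous f) (hfi : ∀ z : ℝ, IntegrableOn f (Iic z)) :
    Continuous (fun z => ∫ x in Iic z, f x) := by
  have h : (fun z : ℝ => ∫ x in Iic z, f x)
      = fun z : ℝ => (∫ t in (0:ℝ)..z, f t) + ∫ x in Iic 0, f x := by
    funext z
    rw [← intervalIntegral.integral_Iic_sub_Iic (hfi 0) (hfi z)]; ring
  rw [h]
  exact (intervalIntegral.continuous_primitive (fun a b => hf.intervalIntegrable a b) 0).add continuous_const

lemma integrableOn_Iic_of_exp_bound {f : ℝ → ℝ} (hf : Continuous f) {A b : ℝ} (hb : 0 < b)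
    (hfb : ∀ s ≤ (0:ℝ), |f s| ≤ A * Real.exp (b * s)) : ∀ z : ℝ, IntegrableOn f (Iic z) := by
  intro z
  have h0 : IntegrableOn f (Iic (0:ℝ)) := by
    refine Integrable.mono' ((myIntegrableOn_exp_mul_Iic hb 0).const_mul A)
      hf.aestronglyMeasurable ?_
    exact (ae_restrict_mem measurableSet_Iic).mono fun s hs => by
      rw [Real.norm_eq_abs]; exact hfb s hs
  have h1 : IntegrableOn f (Ioc (0:ℝ) z) :=
    (hf.continuousOn.integrableOn_compact isCompact_Icc).mono_set Ioc_subset_Icc_self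
  exact (h0.union h1).mono_set fun s hs =>
    (le_or_gt s 0).elim (fun h => Or.inl h) (fun h => Or.inr ⟨h, hs⟩)

lemma swapW (w f : ℝ → ℝ) (hw : Continuous w) {W : ℝ}
    (hW : ∀ x ∈ Iio (0:ℝ), |w x| ≤ W)
    (hf : Continuous f) (hfi : ∀ z : ℝ, IntegrableOn f (Iic z))
    {A b : ℝ} (hb : 0 < b) (hfb : ∀ s ≤ (0:ℝ), |f s| ≤ A * Real.exp (b * s)) :
    ∫ x in Iio (0:ℝ), w x * ∫ s in Iic x, f s
      = ∫ s in Iio (0:ℝ), (∫ x in Ico s (0:ℝ), w x) * f s := by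
  have hW0 : 0 ≤ W := le_trans (abs_nonneg _) (hW (-1) (by norm_num))
  set g : ℝ → ℝ → ℝ := fun x s => (Iic x).indicator (fun s' => w x * f s') s with hg
  have step1 : ∀ x : ℝ, w x * ∫ s in Iic x, f s = ∫ s, g x s := by
    intro x
    rw [hg]
    rw [integral_indicator measurableSet_Iic, integral_const_mul]
  have meas : AEStronglyMeasurable (fun p : ℝ × ℝ => g p.1 p.2)
      ((volume.restrict (Iio (0:ℝ))).prod volume) := by
    have hset : MeasurableSet {p : ℝ × ℝ | p.2 ≤ p.1} :=
      (isClosed_le continuous_snd continuous_fst).measurableSet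
    have heq : (fun p : ℝ × ℝ => g p.1 p.2)
        = {p : ℝ × ℝ | p.2 ≤ p.1}.indicator (fun p => w p.1 * f p.2) := by
      funext p
      simp [hg, Set.indicator_apply]
    rw [heq]
    exact (((hw.comp continuous_fst).mul (hf.comp continuous_snd)).stronglyMeasurable.indicator
      hset).aestronglyMeasurable
  have intble : Integrable (fun p : ℝ × ℝ => g p.1 p.2)
      ((volume.restrict (Iio (0:ℝ))).prod volume) := by
    rw [integrable_prod_iff meas]
    constructor
    · refine (ae_restrict_mem measurableSet_Iio).mono fun x _ => ?_
      exact IntegrableOn.integrable_indicator ((hfi x).const_mul (w x)) measurableSet_Iic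
    · have hnorm : (fun x => ∫ s, ‖g x s‖) = fun x => |w x| * ∫ s in Iic x, |f s| := by
        funext x
        have h2 : (fun s => ‖g x s‖) = (Iic x).indicator (fun s => |w x| * |f s|) := by
          funext s
          simp only [hg, Set.indicator_apply, mem_Iic, Real.norm_eq_abs]
          by_cases hs : s ≤ x <;> simp [hs, abs_mul]
        rw [h2, integral_indicator measurableSet_Iic, integral_const_mul]
      rw [hnorm]
      have hcont : Continuous (fun x => |w x| * ∫ s in Iic x, |f s|) :=
        hw.abs.mul (primCont hf.abs (fun z => (hfi z).abs))
      refine Integrable.mono' (g := fun x => W * (A * (Real.exp (b * x) / b))) ?_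
        hcont.aestronglyMeasurable ?_
      · have := (((myIntegrableOn_exp_mul_Iic hb 0).mono_set
          Iio_subset_Iic_self).const_mul A).const_mul W
        exact this.div_const b |>.congr (Eventually.of_forall fun x => by ring)
      · refine (ae_restrict_mem measurableSet_Iio).mono fun x hx => ?_
        have hxle : (x:ℝ) ≤ 0 := le_of_lt hx
        have hIb : ∫ s in Iic x, |f s| ≤ A * (Real.exp (b * x) / b) := by
          have := setIntegral_mono_on (hfi x).abs
            ((myIntegrableOn_exp_mul_Iic hb x).const_mul A) measurableSet_Iic
            (fun s hs => hfb s (le_trans hs hxle))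
          rwa [integral_const_mul, myIntegral_exp_mul_Iic hb x] at this
        have h0 : 0 ≤ ∫ s in Iic x, |f s| := integral_nonneg fun s => abs_nonneg _
        rw [Real.norm_eq_abs, abs_of_nonneg (mul_nonneg (abs_nonneg _) h0)]
        exact mul_le_mul (hW x hx) hIb h0 hW0
  have lhs_eq : (fun x => w x * ∫ s in Iic x, f s) = fun x => ∫ s, g x s := funext step1
  rw [lhs_eq, integral_integral_swap intble]
  have inner_eq : ∀ s : ℝ, (∫ x in Iio (0:ℝ), g x s)
      = (Iio (0:ℝ)).indicator (fun s' => (∫ x in Ico s' (0:ℝ), w x) * f s') s := by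
    intro s
    have h1 : (fun x => g x s) = (Ici s).indicator (fun x' => w x' * f s) := by
      funext x
      simp [hg, Set.indicator_apply, mem_Iic, mem_Ici]
    rw [h1, integral_indicator measurableSet_Ici,
      Measure.restrict_restrict measurableSet_Ici, Set.Ici_inter_Iio,
      integral_mul_const]
    by_cases hs : s < 0
    · rw [Set.indicator_of_mem (show s ∈ Iio (0:ℝ) from hs)]
    · rw [Set.indicator_of_notMem (show s ∉ Iio (0:ℝ) from hs)]
      rw [Set.Ico_eq_empty (by simpa using not_lt.mp hs : ¬ s < 0)]
      simp
  calc (∫ s, ∫ x in Iio (0:ℝ), g x s)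
      = ∫ s, (Iio (0:ℝ)).indicator (fun s' => (∫ x in Ico s' (0:ℝ), w x) * f s') s := by
        simp_rw [inner_eq]
    _ = ∫ s in Iio (0:ℝ), (∫ x in Ico s (0:ℝ), w x) * f s :=
        integral_indicator measurableSet_Iio

lemma neg_mul_exp_le {r x : ℝ} (hr : 0 < r) :
    (-x) * Real.exp (r * x) ≤ (2 / r) * Real.exp (r / 2 * x) := by
  have h1 : -(r / 2 * x) ≤ Real.exp (-(r / 2 * x)) := by
    have := Real.add_one_le_exp (-(r / 2 * x)); linarith
  have h2 : -x ≤ (2 / r) * Real.exp (-(r / 2 * x)) := by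
    calc -x = (2 / r) * (-(r / 2 * x)) := by field_simp
      _ ≤ (2 / r) * Real.exp (-(r / 2 * x)) :=
        mul_le_mul_of_nonneg_left h1 (by positivity)
  calc (-x) * Real.exp (r * x)
      ≤ ((2 / r) * Real.exp (-(r / 2 * x))) * Real.exp (r * x) :=
        mul_le_mul_of_nonneg_right h2 (Real.exp_pos _).le
    _ = (2 / r) * Real.exp (r / 2 * x) := by
        rw [mul_assoc, ← Real.exp_add]; ring_nf

lemma integral_Ico_neg_mul_exp {c : ℝ} (hc : 0 < c) {t : ℝ} (ht : t ≤ 0) :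
    ∫ x in Ico t (0:ℝ), (-x) * Real.exp (x / c)
      = c ^ 2 - (c ^ 2 - c * t) * Real.exp (t / c) := by
  rw [integral_Ico_eq_integral_Ioo, ← integral_Ioc_eq_integral_Ioo,
    ← intervalIntegral.integral_of_le ht]
  have key : ∀ x ∈ Set.uIcc t (0:ℝ),
      HasDerivAt (fun x => (c ^ 2 - c * x) * Real.exp (x / c)) ((-x) * Real.exp (x / c)) x := by
    intro x _
    have h1 : HasDerivAt (fun x : ℝ => c ^ 2 - c * x) (-c) x := by
      simpa using ((hasDerivAt_id x).const_mul c).const_sub (c ^ 2)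
    have h2 : HasDerivAt (fun x : ℝ => Real.exp (x / c)) (Real.exp (x / c) * (1 / c)) x := by
      simpa using ((hasDerivAt_id x).div_const c).exp
    have := h1.mul h2
    refine this.congr_deriv ?_
    have hc0 : c ≠ 0 := hc.ne'
    have hu : c * (1 / c) = 1 := mul_one_div_cancel hc0
    linear_combination (c - x) * Real.exp (x / c) * hu
  rw [intervalIntegral.integral_eq_sub_of_hasDerivAt key
    (((continuous_id.neg).mul (Real.continuous_exp.comp (continuous_id.div_const c))).intervalIntegrable _ _)]
  simp [Real.exp_zero]

set_option maxHeartbeats 2000000 in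
theorem statement2 (K : ℝ → ℝ) (θ cf : ℝ)
    (hK : Continuous K)
    (hKdecay : ∃ α > (0:ℝ), ∃ ρ > (0:ℝ), ∀ x : ℝ, |K x| ≤ α * Real.exp (-ρ * |x|))
    (hKint : (∫ x : ℝ, K x) = 1)
    (hθ : 0 < θ) :
    (∀ c : ℝ, 0 < c →
      HasDerivAt (phiF K) ((1 / c ^ 2) * ∫ x in Iio (0:ℝ), x * Real.exp (x / c) * K x) c) ∧
    (0 < cf → phiF K cf = θ → (∀ z < 0, Uf K cf z < θ) →
      ((1 / cf ^ 2) * ∫ x in Iio (0:ℝ), x * Real.exp (x / cf) * K x)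
          = -(1 / cf) * (θ - (1 / cf) * ∫ x in Iio (0:ℝ), Real.exp (x / cf) * Uf K cf x) ∧
      ((1 / cf ^ 2) * ∫ x in Iio (0:ℝ), x * Real.exp (x / cf) * K x) < 0) := by
  obtain ⟨α, hα, ρ, hρ, hdec⟩ := hKdecay
  -- basic bound for K on the negative half line
  have hKle : ∀ s : ℝ, s ≤ 0 → |K s| ≤ α * Real.exp (ρ * s) := by
    intro s hs
    have := hdec s
    rwa [abs_of_nonpos hs, neg_mul_neg] at this
  have hKiIic : ∀ z : ℝ, IntegrableOn K (Iic z) :=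
    integrableOn_Iic_of_exp_bound hK hρ hKle
  have hK0 : IntegrableOn K (Iio (0:ℝ)) := (hKiIic 0).mono_set Iio_subset_Iic_self
  constructor
  · -- differentiability of phiF
    intro c hc
    have hc2 : 0 < c / 2 := by positivity
    have hball : ∀ c' ∈ Metric.ball c (c / 2), 0 < c' := by
      intro c' hc'
      rw [Real.ball_eq_Ioo] at hc'
      have := hc'.1
      linarith
    have key := hasDerivAt_integral_of_dominated_loc_of_deriv_le
      (μ := volume.restrict (Iio (0:ℝ)))
      (F := fun c' x => Real.exp (x / c') * K x)
      (F' := fun c' x => -(1 / c' ^ 2) * (x * Real.exp (x / c') * K x))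
      (x₀ := c)
      (bound := fun x => (8 * α / (ρ * c ^ 2)) * Real.exp (ρ / 2 * x))
      (Metric.ball_mem_nhds c hc2)
      (Eventually.of_forall fun c' =>
        ((Real.continuous_exp.comp (continuous_id.div_const c')).mul hK).aestronglyMeasurable)
      (by
        refine Integrable.mono' ((myIntegrableOn_exp_mul_Iic hρ 0).mono_set
            Iio_subset_Iic_self |>.const_mul α)
          ((Real.continuous_exp.comp (continuous_id.div_const c)).mul hK).aestronglyMeasurable ?_
        refine (ae_restrict_mem measurableSet_Iio).mono fun x hx => ?_
        have hx0 : x ≤ 0 := le_of_lt hx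
        have he : Real.exp (x / c) ≤ 1 :=
          Real.exp_le_one_iff.mpr (div_nonpos_of_nonpos_of_nonneg hx0 hc.le)
        rw [Real.norm_eq_abs, abs_mul, abs_of_pos (Real.exp_pos _)]
        calc Real.exp (x / c) * |K x| ≤ 1 * (α * Real.exp (ρ * x)) :=
              mul_le_mul he (hKle x hx0) (abs_nonneg _) zero_le_one
          _ = α * Real.exp (ρ * x) := one_mul _)
      (by
        have : Continuous (fun x : ℝ => -(1 / c ^ 2) * (x * Real.exp (x / c) * K x)) := by
          continuity
        exact this.aestronglyMeasurable)
      (by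
        refine (ae_restrict_mem measurableSet_Iio).mono fun x hx c' hc' => ?_
        have hc'pos : c / 2 < c' := by
          rw [Real.ball_eq_Ioo] at hc'
          have := hc'.1; linarith
        have hx0 : x ≤ 0 := le_of_lt hx
        have he : Real.exp (x / c') ≤ 1 :=
          Real.exp_le_one_iff.mpr (div_nonpos_of_nonpos_of_nonneg hx0 (by linarith))
        have hc'0 : 0 < c' := by linarith
        have h14 : (1:ℝ) / c' ^ 2 ≤ 4 / c ^ 2 := by
          rw [div_le_div_iff₀ (by positivity) (by positivity)]
          nlinarith
        have habs : ‖-(1 / c' ^ 2) * (x * Real.exp (x / c') * K x)‖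
            = (1 / c' ^ 2) * ((-x) * Real.exp (x / c') * |K x|) := by
          rw [Real.norm_eq_abs, abs_mul, abs_mul, abs_mul, abs_neg,
            abs_of_pos (by positivity : (0:ℝ) < 1 / c' ^ 2),
            abs_of_pos (Real.exp_pos _), abs_of_nonpos hx0]
        rw [habs]
        calc (1 / c' ^ 2) * ((-x) * Real.exp (x / c') * |K x|)
            ≤ (4 / c ^ 2) * ((-x) * 1 * (α * Real.exp (ρ * x))) := by
              have hxn : (0:ℝ) ≤ -x := by linarith
              have hKb := hKle x hx0
              gcongr
          _ = (4 * α / c ^ 2) * ((-x) * Real.exp (ρ * x)) := by ring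
          _ ≤ (4 * α / c ^ 2) * ((2 / ρ) * Real.exp (ρ / 2 * x)) := by
              have := neg_mul_exp_le (x := x) hρ
              gcongr
          _ = (8 * α / (ρ * c ^ 2)) * Real.exp (ρ / 2 * x) := by ring)
      (by
        have := ((myIntegrableOn_exp_mul_Iic (by positivity : (0:ℝ) < ρ / 2) 0).mono_set
          Iio_subset_Iic_self).const_mul (8 * α / (ρ * c ^ 2))
        exact this)
      (by
        refine Eventually.of_forall fun x c' hc' => ?_
        have hc'pos : 0 < c' := hball c' hc'
        have hne : c' ≠ 0 := hc'pos.ne'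
        have hinv := ((hasDerivAt_inv hne).const_mul x).exp.mul_const (K x)
        have hfun : (fun y : ℝ => Real.exp (x / y) * K x)
            = fun y => Real.exp (x * y⁻¹) * K x := by
          funext y; rw [div_eq_mul_inv]
        rw [hfun]
        refine hinv.congr_deriv ?_
        simp only [div_eq_mul_inv, one_mul]
        ring)
    have hD := key.2
    rw [integral_const_mul] at hD
    have final := hD.const_sub (∫ x in Iio (0:ℝ), K x)
    have hphi : phiF K = fun c' => (∫ x in Iio (0:ℝ), K x)
        - ∫ x in Iio (0:ℝ), Real.exp (x / c') * K x := rfl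
    rw [hphi]
    simpa using final
  · -- part 2
    intro hcf hphi hU
    have hcf' : (0:ℝ) < 1 / cf := by positivity
    set F : ℝ → ℝ := fun s => ∫ y in Iic s, K y with hF
    have hFcont : Continuous F := primCont hK hKiIic
    have hFle : ∀ s : ℝ, s ≤ 0 → |F s| ≤ (α / ρ) * Real.exp (ρ * s) := by
      intro s hs
      calc |F s| ≤ ∫ y in Iic s, |K y| := by
            rw [hF]
            simpa using norm_integral_le_integral_norm (μ := volume.restrict (Iic s)) K
        _ ≤ ∫ y in Iic s, α * Real.exp (ρ * y) := by
            refine setIntegral_mono_on (hKiIic s).abs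
              ((myIntegrableOn_exp_mul_Iic hρ s).const_mul α) measurableSet_Iic
              (fun y hy => hKle y (le_trans hy hs))
        _ = (α / ρ) * Real.exp (ρ * s) := by
            rw [integral_const_mul, myIntegral_exp_mul_Iic hρ s]; ring
    set f₁ : ℝ → ℝ := fun s => Real.exp (s / cf) * F s with hf₁
    have hf₁cont : Continuous f₁ :=
      (Real.continuous_exp.comp (continuous_id.div_const cf)).mul hFcont
    have hf₁le : ∀ s : ℝ, s ≤ 0 → |f₁ s| ≤ (α / ρ) * Real.exp (ρ * s) := by
      intro s hs
      have he : Real.exp (s / cf) ≤ 1 :=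
        Real.exp_le_one_iff.mpr (div_nonpos_of_nonpos_of_nonneg hs hcf.le)
      rw [hf₁]
      simp only
      rw [abs_mul, abs_of_pos (Real.exp_pos _)]
      calc Real.exp (s / cf) * |F s| ≤ 1 * ((α / ρ) * Real.exp (ρ * s)) :=
            mul_le_mul he (hFle s hs) (abs_nonneg _) zero_le_one
        _ = (α / ρ) * Real.exp (ρ * s) := one_mul _
    have hf₁i : ∀ z : ℝ, IntegrableOn f₁ (Iic z) :=
      integrableOn_Iic_of_exp_bound hf₁cont hρ hf₁le
    set G : ℝ → ℝ := fun z => ∫ s in Iic z, f₁ s with hG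
    have hGcont : Continuous G := primCont hf₁cont hf₁i
    have hGle : ∀ z : ℝ, z ≤ 0 → |G z| ≤ (α / ρ) * (Real.exp (ρ * z) / ρ) := by
      intro z hz
      calc |G z| ≤ ∫ s in Iic z, |f₁ s| := by
            rw [hG]
            simpa using norm_integral_le_integral_norm (μ := volume.restrict (Iic z)) f₁
        _ ≤ ∫ s in Iic z, (α / ρ) * Real.exp (ρ * s) := by
            refine setIntegral_mono_on (hf₁i z).abs
              ((myIntegrableOn_exp_mul_Iic hρ z).const_mul (α / ρ)) measurableSet_Iic
              (fun s hs => hf₁le s (le_trans hs hz))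
        _ = (α / ρ) * (Real.exp (ρ * z) / ρ) := by
            rw [integral_const_mul, myIntegral_exp_mul_Iic hρ z]
    -- pointwise identity for Uf
    have hUf_eq : ∀ z : ℝ, Uf K cf z = (1 / cf) * ((Real.exp (z / cf))⁻¹ * G z) := by
      intro z
      rw [Uf]
      congr 1
      have hinteg : ∀ x : ℝ, Real.exp ((x - z) / cf) * (∫ y in Iic x, K y)
          = (Real.exp (z / cf))⁻¹ * f₁ x := by
        intro x
        rw [sub_div, Real.exp_sub, hf₁]
        simp only [hF]
        field_simp
      simp_rw [hinteg]
      rw [integral_const_mul]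
    have hpoint : ∀ x : ℝ, Real.exp (x / cf) * Uf K cf x = (1 / cf) * G x := by
      intro x
      rw [hUf_eq x]
      have := Real.exp_ne_zero (x / cf)
      field_simp
    -- the three basic integrals
    set KK : ℝ := ∫ x in Iio (0:ℝ), K x with hKK
    set EE : ℝ := ∫ x in Iio (0:ℝ), Real.exp (x / cf) * K x with hEE
    set TT : ℝ := ∫ x in Iio (0:ℝ), x * Real.exp (x / cf) * K x with hTT
    have hEKint : IntegrableOn (fun t => Real.exp (t / cf) * K t) (Iio (0:ℝ)) := by
      refine Integrable.mono' (((myIntegrableOn_exp_mul_Iic hρ 0).mono_set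
          Iio_subset_Iic_self).const_mul α)
        ((Real.continuous_exp.comp (continuous_id.div_const cf)).mul hK).aestronglyMeasurable ?_
      refine (ae_restrict_mem measurableSet_Iio).mono fun x hx => ?_
      have hx0 : x ≤ 0 := le_of_lt hx
      have he : Real.exp (x / cf) ≤ 1 :=
        Real.exp_le_one_iff.mpr (div_nonpos_of_nonpos_of_nonneg hx0 hcf.le)
      rw [Real.norm_eq_abs, abs_mul, abs_of_pos (Real.exp_pos _)]
      calc Real.exp (x / cf) * |K x| ≤ 1 * (α * Real.exp (ρ * x)) :=
            mul_le_mul he (hKle x hx0) (abs_nonneg _) zero_le_one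
        _ = α * Real.exp (ρ * x) := one_mul _
    have hTEKint : IntegrableOn (fun t => t * Real.exp (t / cf) * K t) (Iio (0:ℝ)) := by
      refine Integrable.mono' (((myIntegrableOn_exp_mul_Iic
          (by positivity : (0:ℝ) < ρ / 2) 0).mono_set
          Iio_subset_Iic_self).const_mul (α * (2 / ρ)))
        ((continuous_id.mul (Real.continuous_exp.comp (continuous_id.div_const cf))).mul
          hK).aestronglyMeasurable ?_
      refine (ae_restrict_mem measurableSet_Iio).mono fun x hx => ?_
      have hx0 : x ≤ 0 := le_of_lt hx
      have he : Real.exp (x / cf) ≤ 1 :=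
        Real.exp_le_one_iff.mpr (div_nonpos_of_nonpos_of_nonneg hx0 hcf.le)
      rw [Real.norm_eq_abs, abs_mul, abs_mul, abs_of_pos (Real.exp_pos _), abs_of_nonpos hx0]
      calc (-x) * Real.exp (x / cf) * |K x| ≤ (-x) * 1 * (α * Real.exp (ρ * x)) := by
            have hxn : (0:ℝ) ≤ -x := by linarith
            have hKb := hKle x hx0
            gcongr
        _ = α * ((-x) * Real.exp (ρ * x)) := by ring
        _ ≤ α * ((2 / ρ) * Real.exp (ρ / 2 * x)) := by
            have := neg_mul_exp_le (x := x) hρ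
            gcongr
        _ = (α * (2 / ρ)) * Real.exp (ρ / 2 * x) := by ring
    -- first swap : ∫ G over Iio 0
    have hswap1 : ∫ x in Iio (0:ℝ), (1:ℝ) * ∫ s in Iic x, f₁ s
        = ∫ s in Iio (0:ℝ), (∫ x in Ico s (0:ℝ), (1:ℝ)) * f₁ s := by
      refine swapW (fun _ => (1:ℝ)) f₁ continuous_const (W := 1)
        (fun x _ => by norm_num) hf₁cont hf₁i hρ hf₁le
    -- second swap : with weight
    have hswap2 : ∫ s in Iio (0:ℝ), ((-s) * Real.exp (s / cf)) * ∫ y in Iic s, K y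
        = ∫ t in Iio (0:ℝ), (∫ x in Ico t (0:ℝ), (-x) * Real.exp (x / cf)) * K t := by
      refine swapW (fun s => (-s) * Real.exp (s / cf)) K
        ((continuous_id.neg).mul (Real.continuous_exp.comp (continuous_id.div_const cf)))
        (W := cf) ?_ hK hKiIic hρ hKle
      intro x hx
      have hx0 : x < 0 := hx
      have h1 : -(x / cf) ≤ Real.exp (-(x / cf)) := by
        have := Real.add_one_le_exp (-(x / cf)); linarith
      have h2 : -x ≤ cf * Real.exp (-(x / cf)) := by
        calc -x = cf * (-(x / cf)) := by field_simp
          _ ≤ cf * Real.exp (-(x / cf)) := mul_le_mul_of_nonneg_left h1 hcf.le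
      have h3 : (-x) * Real.exp (x / cf) ≤ cf := by
        calc (-x) * Real.exp (x / cf)
            ≤ (cf * Real.exp (-(x / cf))) * Real.exp (x / cf) :=
              mul_le_mul_of_nonneg_right h2 (Real.exp_pos _).le
          _ = cf * Real.exp (-(x / cf) + x / cf) := by rw [mul_assoc, ← Real.exp_add]
          _ = cf := by rw [neg_add_cancel, Real.exp_zero, mul_one]
      rw [abs_of_nonneg (by nlinarith [Real.exp_pos (x / cf)] : (0:ℝ) ≤ (-x) * Real.exp (x / cf))]
      exact h3
    -- evaluate inner integrals
    have heval1 : ∫ s in Iio (0:ℝ), (∫ x in Ico s (0:ℝ), (1:ℝ)) * f₁ s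
        = ∫ s in Iio (0:ℝ), ((-s) * Real.exp (s / cf)) * ∫ y in Iic s, K y := by
      refine setIntegral_congr_fun measurableSet_Iio fun s hs => ?_
      have hs0 : s < 0 := hs
      rw [setIntegral_const, Real.volume_real_Ico_of_le hs0.le, smul_eq_mul, mul_one]
      rw [hf₁]
      simp only [hF]
      ring
    have heval2 : ∫ t in Iio (0:ℝ), (∫ x in Ico t (0:ℝ), (-x) * Real.exp (x / cf)) * K t
        = ∫ t in Iio (0:ℝ), (cf ^ 2 - (cf ^ 2 - cf * t) * Real.exp (t / cf)) * K t := by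
      refine setIntegral_congr_fun measurableSet_Iio fun t ht => ?_
      rw [integral_Ico_neg_mul_exp hcf (le_of_lt ht)]
    have hsplit : ∫ t in Iio (0:ℝ), (cf ^ 2 - (cf ^ 2 - cf * t) * Real.exp (t / cf)) * K t
        = cf ^ 2 * KK - cf ^ 2 * EE + cf * TT := by
      have hptwise : ∀ t : ℝ, (cf ^ 2 - (cf ^ 2 - cf * t) * Real.exp (t / cf)) * K t
          = cf ^ 2 * K t - cf ^ 2 * (Real.exp (t / cf) * K t)
            + cf * (t * Real.exp (t / cf) * K t) := fun t => by ring
      rw [show (fun t => (cf ^ 2 - (cf ^ 2 - cf * t) * Real.exp (t / cf)) * K t)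
          = fun t => cf ^ 2 * K t - cf ^ 2 * (Real.exp (t / cf) * K t)
            + cf * (t * Real.exp (t / cf) * K t) from funext hptwise]
      have hi1 : IntegrableOn (fun t => cf ^ 2 * K t - cf ^ 2 * (Real.exp (t / cf) * K t))
          (Iio (0:ℝ)) := (hK0.const_mul _).sub (hEKint.const_mul _)
      have hi2 : IntegrableOn (fun t => cf * (t * Real.exp (t / cf) * K t)) (Iio (0:ℝ)) :=
        hTEKint.const_mul _
      have hi3 : IntegrableOn (fun t => cf ^ 2 * K t) (Iio (0:ℝ)) := hK0.const_mul _
      have hi4 : IntegrableOn (fun t => cf ^ 2 * (Real.exp (t / cf) * K t)) (Iio (0:ℝ)) :=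
        hEKint.const_mul _
      rw [integral_add hi1 hi2, integral_sub hi3 hi4,
        integral_const_mul, integral_const_mul, integral_const_mul]
    -- the value of I
    set I : ℝ := ∫ x in Iio (0:ℝ), Real.exp (x / cf) * Uf K cf x with hI
    have hIeq : I = cf * θ + TT := by
      have h1 : I = (1 / cf) * ∫ x in Iio (0:ℝ), (1:ℝ) * ∫ s in Iic x, f₁ s := by
        rw [hI]
        rw [show (fun x => Real.exp (x / cf) * Uf K cf x) = fun x => (1 / cf) * G x
          from funext hpoint]
        rw [integral_const_mul]
        congr 1
        refine setIntegral_congr_fun measurableSet_Iio fun x _ => ?_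
        rw [one_mul, hG]
      have step : cf * I = cf ^ 2 * KK - cf ^ 2 * EE + cf * TT := by
        rw [h1, hswap1, heval1, hswap2, heval2, hsplit, ← mul_assoc,
          mul_one_div_cancel hcf.ne', one_mul]
      have hθ' : KK - EE = θ := hphi
      have h2 : cf * I = cf * (cf * θ + TT) := by
        rw [step]; linear_combination (cf ^ 2) * hθ'
      exact mul_left_cancel₀ hcf.ne' h2
    have hθI : TT = I - cf * θ := by rw [hIeq]; ring
    -- integrability of x ↦ exp(x/cf) * Uf x on Iio 0
    have hUfint : IntegrableOn (fun x => Real.exp (x / cf) * Uf K cf x) (Iio (0:ℝ)) := by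
      rw [show (fun x => Real.exp (x / cf) * Uf K cf x) = fun x => (1 / cf) * G x
        from funext hpoint]
      refine Integrable.mono' (((myIntegrableOn_exp_mul_Iic hρ 0).mono_set
          Iio_subset_Iic_self).const_mul ((1 / cf) * (α / ρ / ρ)))
        ((continuous_const.mul hGcont)).aestronglyMeasurable ?_
      refine (ae_restrict_mem measurableSet_Iio).mono fun x hx => ?_
      have hx0 : x ≤ 0 := le_of_lt hx
      rw [Real.norm_eq_abs, abs_mul, abs_of_pos hcf']
      calc (1 / cf) * |G x| ≤ (1 / cf) * ((α / ρ) * (Real.exp (ρ * x) / ρ)) :=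
            mul_le_mul_of_nonneg_left (hGle x hx0) hcf'.le
        _ = (1 / cf) * (α / ρ / ρ) * Real.exp (ρ * x) := by ring
    have hExpInt : IntegrableOn (fun x => Real.exp (x / cf)) (Iio (0:ℝ)) := by
      have := (myIntegrableOn_exp_mul_Iic (b := 1 / cf) hcf' 0).mono_set Iio_subset_Iic_self
      refine this.congr (Eventually.of_forall fun x => ?_)
      simp only [one_div]
      rw [← div_eq_inv_mul]
    have hExpVal : ∫ x in Iio (0:ℝ), Real.exp (x / cf) = cf := by
      rw [setIntegral_congr_set Iio_ae_eq_Iic]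
      have : ∫ x in Iic (0:ℝ), Real.exp (x / cf)
          = ∫ x in Iic (0:ℝ), Real.exp ((1 / cf) * x) := by
        refine setIntegral_congr_fun measurableSet_Iic fun x _ => ?_
        rw [one_div, ← div_eq_inv_mul]
      rw [this, myIntegral_exp_mul_Iic hcf' 0]
      simp
    -- strict inequality
    have hIlt : I < cf * θ := by
      have hpos : 0 < ∫ x in Iio (0:ℝ),
          (θ * Real.exp (x / cf) - Real.exp (x / cf) * Uf K cf x) := by
        rw [setIntegral_pos_iff_support_of_nonneg_ae]
        · refine lt_of_lt_of_le ?_ (measure_mono (show Iio (0:ℝ) ⊆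
            Function.support (fun x => θ * Real.exp (x / cf) - Real.exp (x / cf) * Uf K cf x)
              ∩ Iio (0:ℝ) from ?_))
          · rw [Real.volume_Iio]
            exact ENNReal.zero_lt_top
          · intro x hx
            refine ⟨?_, hx⟩
            have hUx := hU x hx
            have : 0 < Real.exp (x / cf) * (θ - Uf K cf x) :=
              mul_pos (Real.exp_pos _) (by linarith)
            simp only [Function.mem_support]
            intro hzero
            nlinarith [mul_pos (Real.exp_pos (x / cf)) (sub_pos.mpr hUx)]
        · refine (ae_restrict_mem measurableSet_Iio).mono fun x hx => ?_
          have hUx := hU x hx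
          have : 0 < Real.exp (x / cf) * (θ - Uf K cf x) :=
            mul_pos (Real.exp_pos _) (by linarith)
          simp only [Pi.zero_apply]
          nlinarith [mul_pos (Real.exp_pos (x / cf)) (sub_pos.mpr hUx)]
        · exact (hExpInt.const_mul θ).sub hUfint
      rw [integral_sub (hExpInt.const_mul θ) hUfint, integral_const_mul, hExpVal, ← hI] at hpos
      linarith
    have hTTneg : TT < 0 := by rw [hθI]; linarith
    constructor
    · rw [hθI]
      field_simp
      ring
    · exact mul_neg_of_pos_of_neg (by positivity) hTTneg
end

section
/- Let γ > 0, let ε > 0 satisfy (1−γε)² > 4ε, and let a > 0 and c > 0 be arbitrary. Then the functions U and Q satisfy U(z) → 0 and Q(z) → 0 both as z → −∞ and as z → +∞. -/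
open MeasureTheory Real Filter Set Topology

noncomputable def om1 (γ ε : ℝ) : ℝ := (1 + γ * ε + Real.sqrt ((1 - γ * ε) ^ 2 - 4 * ε)) / 2

noncomputable def om2 (γ ε : ℝ) : ℝ := (1 + γ * ε - Real.sqrt ((1 - γ * ε) ^ 2 - 4 * ε)) / 2

/-- `C_x(x,c,ε)`. -/
noncomputable def Cx (γ x c ε : ℝ) : ℝ :=
  (1 / (c * (om1 γ ε - om2 γ ε))) *
    ((1 - om2 γ ε) * Real.exp (om1 γ ε * x / c) - (1 - om1 γ ε) * Real.exp (om2 γ ε * x / c))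

/-- `D_x(x,c,ε)`. -/
noncomputable def Dx (γ x c ε : ℝ) : ℝ :=
  (ε / (c * (om1 γ ε - om2 γ ε))) *
    (-Real.exp (om1 γ ε * x / c) + Real.exp (om2 γ ε * x / c))

/-- Formal pulse component `U(z)`. -/
noncomputable def Upulse (K : ℝ → ℝ) (γ a c ε z : ℝ) : ℝ :=
  ∫ x in Iic z, Cx γ (x - z) c ε * ∫ y in (x - a)..x, K y

/-- Formal pulse component `Q(z)`. -/
noncomputable def Qpulse (K : ℝ → ℝ) (γ a c ε z : ℝ) : ℝ :=
  ∫ x in Iic z, Dx γ (x - z) c ε * ∫ y in (x - a)..x, K y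

lemma integrableOn_exp_mul_Iic' {b : ℝ} (hb : 0 < b) :
    IntegrableOn (fun t => Real.exp (b * t)) (Iic (0:ℝ)) := by
  have h0 : Integrable ((Iic (0:ℝ)).indicator Real.exp) := by
    rw [integrable_indicator_iff measurableSet_Iic]
    exact integrableOn_exp_Iic 0
  have h1 : Integrable (fun t => ((Iic (0:ℝ)).indicator Real.exp) (b * t)) :=
    h0.comp_mul_left' hb.ne'
  have h2 : (fun t => ((Iic (0:ℝ)).indicator Real.exp) (b * t)) =
      (Iic (0:ℝ)).indicator (fun t => Real.exp (b * t)) := by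
    ext t
    by_cases ht : t ≤ 0
    · have hbt : b * t ≤ 0 := mul_nonpos_of_nonneg_of_nonpos hb.le ht
      simp [Set.indicator_apply, ht, hbt]
    · have hbt : ¬ (b * t ≤ 0) := by
        push_neg at ht ⊢
        exact mul_pos hb ht
      simp [Set.indicator_apply, ht, hbt]
  rw [h2, integrable_indicator_iff measurableSet_Iic] at h1
  exact h1

lemma shift_Iic_integral (f : ℝ → ℝ) (z : ℝ) :
    ∫ x in Iic z, f x = ∫ t in Iic (0:ℝ), f (t + z) := by
  rw [← integral_indicator measurableSet_Iic, ← integral_indicator measurableSet_Iic]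
  rw [← integral_add_right_eq_self (fun x => (Iic z).indicator f x) z]
  congr 1
  ext t
  by_cases ht : t ≤ 0
  · have : t + z ≤ z := by linarith
    simp [Set.indicator_apply, ht, this]
  · have : ¬ (t + z ≤ z) := by push_neg at ht ⊢; linarith
    simp [Set.indicator_apply, ht, this]

/-- Key convergence lemma: an integrable kernel on `Iic 0` against a translate of a
uniformly exponentially decaying continuous function tends to 0. -/
lemma key_tendsto (φ : ℝ → ℝ) (hφc : Continuous φ) (M ρ : ℝ) (hρ : 0 < ρ)
    (hφ : ∀ x, |φ x| ≤ M * Real.exp (-ρ * |x|))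
    (g : ℝ → ℝ) (hg : Continuous g) (hgi : IntegrableOn g (Iic (0:ℝ)))
    (l : Filter ℝ) [l.IsCountablyGenerated] (hl : Tendsto (fun z : ℝ => |z|) l atTop) :
    Tendsto (fun z => ∫ t in Iic (0:ℝ), g t * φ (t + z)) l (𝓝 0) := by
  have hM : 0 ≤ M := by
    have := (abs_nonneg (φ 0)).trans (hφ 0)
    simpa using this
  have hφle : ∀ x, |φ x| ≤ M := fun x => by
    refine (hφ x).trans ?_
    have : Real.exp (-ρ * |x|) ≤ 1 := by
      rw [Real.exp_le_one_iff]
      have : 0 ≤ ρ * |x| := mul_nonneg hρ.le (abs_nonneg x)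
      linarith
    nlinarith [Real.exp_pos (-ρ * |x|)]
  suffices h : Tendsto (fun z => ∫ t in Iic (0:ℝ), g t * φ (t + z)) l
      (𝓝 (∫ _t in Iic (0:ℝ), (0:ℝ))) by simpa using h
  refine tendsto_integral_filter_of_dominated_convergence (μ := volume.restrict (Iic 0))
    (l := l) (F := fun z t => g t * φ (t + z)) (f := fun _ => (0:ℝ)) (fun t => |g t| * M)
    ?_ ?_ ?_ ?_
  · filter_upwards with z
    exact ((hg.mul (hφc.comp (continuous_id.add continuous_const))).aestronglyMeasurable).restrict
  · filter_upwards with z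
    filter_upwards with t
    rw [Real.norm_eq_abs, abs_mul]
    exact mul_le_mul_of_nonneg_left (hφle (t + z)) (abs_nonneg _)
  · exact hgi.abs.mul_const M
  · filter_upwards with t
    have habs : Tendsto (fun z : ℝ => |t + z|) l atTop := by
      apply tendsto_atTop_mono (fun z => ?_) (tendsto_atTop_add_const_right l (-|t|) hl)
      have h1 := abs_sub_abs_le_abs_sub z (t + z)
      have h2 : z - (t + z) = -t := by ring
      rw [h2, abs_neg] at h1
      linarith
    have hexp : Tendsto (fun z : ℝ => M * Real.exp (-ρ * |t + z|)) l (𝓝 0) := by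
      rw [show (0:ℝ) = M * 0 by ring]
      apply Tendsto.const_mul
      apply Real.tendsto_exp_atBot.comp
      have h3 : Tendsto (fun z : ℝ => ρ * |t + z|) l atTop :=
        (tendsto_const_mul_atTop_of_pos hρ).mpr habs
      exact (tendsto_neg_atTop_atBot.comp h3).congr (fun z => by simp [neg_mul, Function.comp])
    have hlim : Tendsto (fun z : ℝ => |g t| * (M * Real.exp (-ρ * |t + z|))) l (𝓝 0) := by
      rw [show (0:ℝ) = |g t| * 0 by ring]
      exact hexp.const_mul _
    apply squeeze_zero_norm (fun z => ?_) hlim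
    rw [Real.norm_eq_abs, abs_mul]
    exact mul_le_mul_of_nonneg_left (hφ (t + z)) (abs_nonneg _)

theorem statement4 (K : ℝ → ℝ)
    (hK : Continuous K)
    (hKdecay : ∃ α > (0:ℝ), ∃ ρ > (0:ℝ), ∀ x : ℝ, |K x| ≤ α * Real.exp (-ρ * |x|))
    (hKint : (∫ x : ℝ, K x) = 1)
    (γ a c ε : ℝ) (hγ : 0 < γ) (hε : 0 < ε) (hdisc : 4 * ε < (1 - γ * ε) ^ 2)
    (ha : 0 < a) (hc : 0 < c) :
    Tendsto (Upulse K γ a c ε) atBot (𝓝 0) ∧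
    Tendsto (Upulse K γ a c ε) atTop (𝓝 0) ∧
    Tendsto (Qpulse K γ a c ε) atBot (𝓝 0) ∧
    Tendsto (Qpulse K γ a c ε) atTop (𝓝 0) := by
  obtain ⟨α, hα, ρ, hρ, hKb⟩ := hKdecay
  set φ : ℝ → ℝ := fun x => ∫ y in (x - a)..x, K y with hφdef
  have hKii : ∀ u v : ℝ, IntervalIntegrable K volume u v := fun u v =>
    hK.intervalIntegrable u v
  have hφc : Continuous φ := by
    have hrw : φ = fun x => (∫ y in (0:ℝ)..x, K y) - ∫ y in (0:ℝ)..(x - a), K y := by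
      funext x
      rw [intervalIntegral.integral_interval_sub_left (hKii 0 x) (hKii 0 (x - a))]
    rw [hrw]
    exact (intervalIntegral.continuous_primitive hKii 0).sub
      ((intervalIntegral.continuous_primitive hKii 0).comp (continuous_id.sub continuous_const))
  set M : ℝ := α * Real.exp (ρ * a) * a with hMdef
  have hφb : ∀ x, |φ x| ≤ M * Real.exp (-ρ * |x|) := by
    intro x
    have hb : ∀ y ∈ Set.uIoc (x - a) x, ‖K y‖ ≤ α * (Real.exp (ρ * a) * Real.exp (-ρ * |x|)) := by
      intro y hy
      rw [Set.uIoc_of_le (by linarith)] at hy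
      obtain ⟨hy1, hy2⟩ := hy
      have h1 : |x| - |y| ≤ |x - y| := abs_sub_abs_le_abs_sub x y
      have h2 : |x - y| ≤ a := by
        rw [abs_of_nonneg (by linarith)]; linarith
      have h3 : Real.exp (-ρ * |y|) ≤ Real.exp (ρ * a) * Real.exp (-ρ * |x|) := by
        rw [← Real.exp_add]
        apply Real.exp_le_exp.mpr
        nlinarith
      calc ‖K y‖ = |K y| := rfl
        _ ≤ α * Real.exp (-ρ * |y|) := hKb y
        _ ≤ α * (Real.exp (ρ * a) * Real.exp (-ρ * |x|)) :=
            mul_le_mul_of_nonneg_left h3 hα.le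
    have hle := intervalIntegral.norm_integral_le_of_norm_le_const hb
    have hxa : |x - (x - a)| = a := by rw [abs_of_nonneg (by linarith)]; ring_nf
    rw [hxa] at hle
    calc |φ x| = ‖∫ y in (x - a)..x, K y‖ := rfl
      _ ≤ α * (Real.exp (ρ * a) * Real.exp (-ρ * |x|)) * a := hle
      _ = M * Real.exp (-ρ * |x|) := by rw [hMdef]; ring
  have hD : 0 < (1 - γ * ε) ^ 2 - 4 * ε := by nlinarith
  have hsq : 0 < Real.sqrt ((1 - γ * ε) ^ 2 - 4 * ε) := Real.sqrt_pos.mpr hD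
  have hsqlt : Real.sqrt ((1 - γ * ε) ^ 2 - 4 * ε) < 1 + γ * ε := by
    have h1 : (1 - γ * ε) ^ 2 - 4 * ε < (1 + γ * ε) ^ 2 := by nlinarith
    have h2 : Real.sqrt ((1 - γ * ε) ^ 2 - 4 * ε) < Real.sqrt ((1 + γ * ε) ^ 2) :=
      Real.sqrt_lt_sqrt hD.le h1
    rwa [Real.sqrt_sq (by positivity)] at h2
  have hom2 : 0 < om2 γ ε := by unfold om2; linarith
  have hom1 : 0 < om1 γ ε := by unfold om1; positivity
  have hexp1 : IntegrableOn (fun t => Real.exp (om1 γ ε * t / c)) (Iic (0:ℝ)) := by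
    have h := integrableOn_exp_mul_Iic' (div_pos hom1 hc)
    simpa [div_mul_eq_mul_div] using h
  have hexp2 : IntegrableOn (fun t => Real.exp (om2 γ ε * t / c)) (Iic (0:ℝ)) := by
    have h := integrableOn_exp_mul_Iic' (div_pos hom2 hc)
    simpa [div_mul_eq_mul_div] using h
  have hCint : IntegrableOn (fun t => Cx γ t c ε) (Iic (0:ℝ)) := by
    unfold Cx
    exact (((hexp1.const_mul (1 - om2 γ ε)).sub
      (hexp2.const_mul (1 - om1 γ ε))).const_mul _)
  have hDint : IntegrableOn (fun t => Dx γ t c ε) (Iic (0:ℝ)) := by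
    unfold Dx
    exact (((hexp1.neg).add hexp2).const_mul _)
  have hCcont : Continuous (fun t => Cx γ t c ε) := by unfold Cx; fun_prop
  have hDcont : Continuous (fun t => Dx γ t c ε) := by unfold Dx; fun_prop
  have hUeq : ∀ z, Upulse K γ a c ε z = ∫ t in Iic (0:ℝ), Cx γ t c ε * φ (t + z) := by
    intro z
    unfold Upulse
    rw [shift_Iic_integral (fun x => Cx γ (x - z) c ε * ∫ y in (x - a)..x, K y) z]
    simp only [add_sub_cancel_right]
    rfl
  have hQeq : ∀ z, Qpulse K γ a c ε z = ∫ t in Iic (0:ℝ), Dx γ t c ε * φ (t + z) := by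
    intro z
    unfold Qpulse
    rw [shift_Iic_integral (fun x => Dx γ (x - z) c ε * ∫ y in (x - a)..x, K y) z]
    simp only [add_sub_cancel_right]
    rfl
  refine ⟨?_, ?_, ?_, ?_⟩
  · exact (key_tendsto φ hφc M ρ hρ hφb _ hCcont hCint atBot
      tendsto_abs_atBot_atTop).congr (fun z => (hUeq z).symm)
  · exact (key_tendsto φ hφc M ρ hρ hφb _ hCcont hCint atTop
      tendsto_abs_atTop_atTop).congr (fun z => (hUeq z).symm)
  · exact (key_tendsto φ hφc M ρ hρ hφb _ hDcont hDint atBot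
      tendsto_abs_atBot_atTop).congr (fun z => (hQeq z).symm)
  · exact (key_tendsto φ hφc M ρ hρ hφb _ hDcont hDint atTop
      tendsto_abs_atTop_atTop).congr (fun z => (hQeq z).symm)
end

section
/- Fix τ > 0, c > 0 and γ > 0. Then f(τ,c,ε) → φ_f(c) as ε → 0⁺. -/
open MeasureTheory Real Filter Set Topology

/-- Pulse speed index function `f(τ,c,ε) = U(0)`. -/
noncomputable def ff (K : ℝ → ℝ) (γ τ c ε : ℝ) : ℝ :=
  ∫ x in Iio (0:ℝ), Cx γ x c ε * ∫ y in (x - τ / ε)..x, K y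

lemma Cx_bound {γ c ε : ℝ} (hc : 0 < c) (hγ : 0 < γ) (hε : 0 < ε)
    (h1 : (1/4:ℝ) ≤ (1 - γ*ε)^2 - 4*ε) (h2 : γ*ε ≤ 1/2) {x : ℝ} (hx : x ≤ 0) :
    |Cx γ x c ε| ≤ 4 / c := by
  set s := Real.sqrt ((1 - γ*ε)^2 - 4*ε) with hs
  have hγε : 0 < γ * ε := mul_pos hγ hε
  have hs1 : 1/2 ≤ s := by
    have h := Real.sqrt_le_sqrt h1
    rwa [show Real.sqrt (1/4) = 1/2 by
      rw [show (1/4:ℝ) = (1/2)^2 by norm_num]; exact Real.sqrt_sq (by norm_num)] at h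
  have hsle : s ≤ 1 - γ*ε := by
    have h' : (1-γ*ε)^2 - 4*ε ≤ (1-γ*ε)^2 := by nlinarith
    have h := Real.sqrt_le_sqrt h'
    rwa [Real.sqrt_sq (by linarith : (0:ℝ) ≤ 1 - γ*ε)] at h
  have hom : om1 γ ε - om2 γ ε = s := by simp only [om1, om2, hs]; ring
  have hom1v : om1 γ ε = (1 + γ*ε + s)/2 := rfl
  have hom2v : om2 γ ε = (1 + γ*ε - s)/2 := rfl
  have hb1 : 0 ≤ om1 γ ε := by rw [hom1v]; linarith
  have hb2 : 0 ≤ om2 γ ε := by rw [hom2v]; linarith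
  have hb3 : |1 - om1 γ ε| ≤ 1 := by rw [hom1v, abs_le]; constructor <;> nlinarith
  have hb4 : |1 - om2 γ ε| ≤ 1 := by rw [hom2v, abs_le]; constructor <;> nlinarith
  have he1 : Real.exp (om1 γ ε * x / c) ≤ 1 := by
    rw [← Real.exp_zero]
    exact Real.exp_le_exp.2 (div_nonpos_of_nonpos_of_nonneg
      (mul_nonpos_of_nonneg_of_nonpos hb1 hx) hc.le)
  have he2 : Real.exp (om2 γ ε * x / c) ≤ 1 := by
    rw [← Real.exp_zero]
    exact Real.exp_le_exp.2 (div_nonpos_of_nonpos_of_nonneg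
      (mul_nonpos_of_nonneg_of_nonpos hb2 hx) hc.le)
  have hcs : 0 < c * s := mul_pos hc (by linarith)
  have hA : |1/(c*s)| ≤ 2/c := by
    rw [abs_of_pos (by positivity), div_le_div_iff₀ hcs hc]
    nlinarith
  have hB : |(1 - om2 γ ε) * Real.exp (om1 γ ε * x / c)
      - (1 - om1 γ ε) * Real.exp (om2 γ ε * x / c)| ≤ 2 := by
    have t1 : |(1 - om2 γ ε) * Real.exp (om1 γ ε * x / c)| ≤ 1 := by
      rw [abs_mul, abs_of_pos (Real.exp_pos _)]
      nlinarith [abs_nonneg (1 - om2 γ ε), Real.exp_pos (om1 γ ε * x / c)]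
    have t2 : |(1 - om1 γ ε) * Real.exp (om2 γ ε * x / c)| ≤ 1 := by
      rw [abs_mul, abs_of_pos (Real.exp_pos _)]
      nlinarith [abs_nonneg (1 - om1 γ ε), Real.exp_pos (om2 γ ε * x / c)]
    calc |(1 - om2 γ ε) * Real.exp (om1 γ ε * x / c)
        - (1 - om1 γ ε) * Real.exp (om2 γ ε * x / c)|
        ≤ |(1 - om2 γ ε) * Real.exp (om1 γ ε * x / c)|
          + |(1 - om1 γ ε) * Real.exp (om2 γ ε * x / c)| := abs_sub _ _
      _ ≤ 2 := by linarith
  calc |Cx γ x c ε| = |1/(c*s)| * |(1 - om2 γ ε) * Real.exp (om1 γ ε * x / c)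
      - (1 - om1 γ ε) * Real.exp (om2 γ ε * x / c)| := by rw [Cx, hom, abs_mul]
    _ ≤ (2/c) * 2 := mul_le_mul hA hB (abs_nonneg _) (by positivity)
    _ = 4/c := by ring

lemma om1_cont (γ : ℝ) : Continuous fun ε : ℝ => om1 γ ε := by
  unfold om1
  exact (((continuous_const.add (continuous_const.mul continuous_id)).add
    (Real.continuous_sqrt.comp (by fun_prop))).div_const 2)

lemma om2_cont (γ : ℝ) : Continuous fun ε : ℝ => om2 γ ε := by
  unfold om2
  exact (((continuous_const.add (continuous_const.mul continuous_id)).sub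
    (Real.continuous_sqrt.comp (by fun_prop))).div_const 2)

lemma om1_zero (γ : ℝ) : om1 γ 0 = 1 := by
  simp [om1, Real.sqrt_one]

lemma om2_zero (γ : ℝ) : om2 γ 0 = 0 := by
  simp [om2, Real.sqrt_one]

lemma Cx_tendsto {γ c : ℝ} (hc : 0 < c) (x : ℝ) :
    Tendsto (fun ε => Cx γ x c ε) (𝓝[>] (0:ℝ)) (𝓝 (Real.exp (x/c) / c)) := by
  have hcx : ContinuousAt (fun ε => Cx γ x c ε) 0 := by
    unfold Cx
    have hden : ContinuousAt (fun ε => c * (om1 γ ε - om2 γ ε)) 0 :=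
      (continuous_const.mul ((om1_cont γ).sub (om2_cont γ))).continuousAt
    have hden0 : c * (om1 γ 0 - om2 γ 0) ≠ 0 := by
      rw [om1_zero, om2_zero]; simpa using hc.ne'
    have e1 : Continuous fun ε => Real.exp (om1 γ ε * x / c) :=
      Real.continuous_exp.comp (((om1_cont γ).mul continuous_const).div_const c)
    have e2 : Continuous fun ε => Real.exp (om2 γ ε * x / c) :=
      Real.continuous_exp.comp (((om2_cont γ).mul continuous_const).div_const c)
    exact (continuousAt_const.div hden hden0).mul
      (((continuous_const.sub (om2_cont γ)).mul e1).sub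
        ((continuous_const.sub (om1_cont γ)).mul e2)).continuousAt
  have := hcx.tendsto.mono_left (nhdsWithin_le_nhds : 𝓝[>] (0:ℝ) ≤ 𝓝 0)
  have hval : Cx γ x c 0 = Real.exp (x/c) / c := by
    rw [Cx, om1_zero, om2_zero]
    simp
    ring
  rwa [hval] at this

theorem statement5 (K : ℝ → ℝ)
    (hK : Continuous K)
    (hKdecay : ∃ α > (0:ℝ), ∃ ρ > (0:ℝ), ∀ x : ℝ, |K x| ≤ α * Real.exp (-ρ * |x|))
    (hKint : (∫ x : ℝ, K x) = 1)
    (τ c γ : ℝ) (hτ : 0 < τ) (hc : 0 < c) (hγ : 0 < γ) :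
    Tendsto (fun ε => ff K γ τ c ε) (𝓝[>] (0:ℝ)) (𝓝 (phiF K c)) := by
  obtain ⟨α, hα, ρ, hρ, hKb⟩ := hKdecay
  -- K is integrable
  have hKI : Integrable K := by
    have hbound : Integrable (fun x : ℝ => α * Real.exp (-ρ * |x|)) := by
      rw [← integrableOn_univ, ← Iic_union_Ioi (a := (0:ℝ)), integrableOn_union]
      constructor
      · apply MeasureTheory.IntegrableOn.congr_fun
          ((integrableOn_exp_mul_Iic hρ 0).const_mul α) ?_ measurableSet_Iic
        intro y hy
        simp only
        rw [abs_of_nonpos (mem_Iic.mp hy)]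
        ring_nf
      · apply MeasureTheory.IntegrableOn.congr_fun
          ((exp_neg_integrableOn_Ioi 0 hρ).const_mul α) ?_ measurableSet_Ioi
        intro y hy
        simp only
        rw [abs_of_pos (mem_Ioi.mp hy)]
    exact hbound.mono' hK.aestronglyMeasurable (ae_of_all _ fun x => by
      simpa [Real.norm_eq_abs] using hKb x)
  -- bound on the tail integral of |K|
  have habs : ∀ x ≤ (0:ℝ), ∫ y in Iic x, |K y| ≤ α/ρ * Real.exp (ρ * x) := by
    intro x hx
    calc ∫ y in Iic x, |K y| ≤ ∫ y in Iic x, α * Real.exp (ρ * y) := by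
          apply setIntegral_mono_on hKI.abs.integrableOn
            ((integrableOn_exp_mul_Iic hρ x).const_mul α) measurableSet_Iic
          intro y hy
          calc |K y| ≤ α * Real.exp (-ρ * |y|) := hKb y
            _ = α * Real.exp (ρ * y) := by
                rw [abs_of_nonpos (le_trans (hy : y ≤ x) hx)]; ring_nf
      _ = α/ρ * Real.exp (ρ * x) := by
          rw [MeasureTheory.integral_const_mul, integral_exp_mul_Iic hρ]; ring
  have hFbound : ∀ x ≤ (0:ℝ), |∫ y in Iic x, K y| ≤ α/ρ * Real.exp (ρ * x) := by
    intro x hx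
    calc |∫ y in Iic x, K y| ≤ ∫ y in Iic x, |K y| := by
          simpa [Real.norm_eq_abs] using norm_integral_le_integral_norm (μ := volume.restrict (Iic x)) K
      _ ≤ α/ρ * Real.exp (ρ * x) := habs x hx
  have hgbound : ∀ ε : ℝ, 0 < ε → ∀ x ≤ (0:ℝ),
      |∫ y in (x - τ/ε)..x, K y| ≤ α/ρ * Real.exp (ρ * x) := by
    intro ε hε x hx
    have hle : x - τ/ε ≤ x := by
      have : 0 < τ/ε := div_pos hτ hε
      linarith
    calc |∫ y in (x - τ/ε)..x, K y| ≤ ∫ y in (x - τ/ε)..x, |K y| :=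
          intervalIntegral.abs_integral_le_integral_abs hle
      _ = ∫ y in Ioc (x - τ/ε) x, |K y| := intervalIntegral.integral_of_le hle
      _ ≤ ∫ y in Iic x, |K y| := by
          apply setIntegral_mono_set hKI.abs.integrableOn
            (ae_of_all _ fun y => abs_nonneg _)
            (HasSubset.Subset.eventuallyLE Ioc_subset_Iic_self)
      _ ≤ α/ρ * Real.exp (ρ * x) := habs x hx
  -- the primitive of K
  have hPderiv : ∀ x : ℝ, HasDerivAt (fun t => ∫ y in (0:ℝ)..t, K y) (K x) x :=
    fun x => (hK.integral_hasStrictDerivAt 0 x).hasDerivAt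
  have hPcont : Continuous fun t => ∫ y in (0:ℝ)..t, K y :=
    continuous_iff_continuousAt.2 fun x => (hPderiv x).continuousAt
  have hsplit : ∀ d x : ℝ, (∫ y in (x - d)..x, K y)
      = (∫ y in (0:ℝ)..x, K y) - ∫ y in (0:ℝ)..(x - d), K y := by
    intro d x
    have h := intervalIntegral.integral_add_adjacent_intervals
      (hK.intervalIntegrable (μ := volume) 0 (x - d)) (hK.intervalIntegrable (μ := volume) (x - d) x)
    linarith
  -- F and its properties
  have hFderiv : ∀ x : ℝ, HasDerivAt (fun t => ∫ y in Iic t, K y) (K x) x := by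
    intro x
    have heq : (fun t => ∫ y in Iic t, K y)
        = fun t => (∫ y in (0:ℝ)..t, K y) + ∫ y in Iic (0:ℝ), K y := by
      funext t
      have h := intervalIntegral.integral_Iic_sub_Iic (μ := volume) (f := K)
        (a := (0:ℝ)) (b := t) hKI.integrableOn hKI.integrableOn
      linarith
    rw [heq]
    exact (hPderiv x).add_const _
  have hFcont : Continuous fun t => ∫ y in Iic t, K y :=
    continuous_iff_continuousAt.2 fun x => (hFderiv x).continuousAt
  -- Step 1: dominated convergence
  have hmain : Tendsto (fun ε => ff K γ τ c ε) (𝓝[>] (0:ℝ))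
      (𝓝 (∫ x in Iio (0:ℝ), Real.exp (x/c) / c * ∫ y in Iic x, K y)) := by
    unfold ff
    apply tendsto_integral_filter_of_dominated_convergence
      (fun x => 4/c * (α/ρ * Real.exp (ρ * x)))
    · filter_upwards with ε
      have hcont : Continuous fun x => Cx γ x c ε * ∫ y in (x - τ/ε)..x, K y := by
        have hCc : Continuous fun x => Cx γ x c ε := by
          unfold Cx
          exact continuous_const.mul
            ((continuous_const.mul (Real.continuous_exp.comp
              ((continuous_const.mul continuous_id).div_const c))).sub
             (continuous_const.mul (Real.continuous_exp.comp
              ((continuous_const.mul continuous_id).div_const c))))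
        exact hCc.mul ((hPcont.sub (hPcont.comp
          (continuous_id.sub continuous_const))).congr fun x => (hsplit (τ/ε) x).symm)
      exact hcont.aestronglyMeasurable
    · have hev : ∀ᶠ ε in 𝓝[>] (0:ℝ),
          ((1/4:ℝ) ≤ (1 - γ*ε)^2 - 4*ε ∧ γ*ε ≤ 1/2) ∧ 0 < ε := by
        apply Eventually.and ?_ self_mem_nhdsWithin
        apply eventually_nhdsWithin_of_eventually_nhds
        have hc1 : Tendsto (fun ε : ℝ => (1 - γ*ε)^2 - 4*ε) (𝓝 0) (𝓝 1) := by
          have : ContinuousAt (fun ε : ℝ => (1 - γ*ε)^2 - 4*ε) 0 := by fun_prop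
          have h0 : ((1:ℝ) - γ*0)^2 - 4*0 = 1 := by norm_num
          simpa [h0] using this.tendsto
        have hc2 : Tendsto (fun ε : ℝ => γ*ε) (𝓝 0) (𝓝 0) := by
          simpa using (continuous_mul_left γ).tendsto (0:ℝ)
        exact (hc1.eventually_const_le (by norm_num)).and
          (hc2.eventually_le_const (by norm_num))
      filter_upwards [hev] with ε hε
      obtain ⟨⟨h1, h2⟩, hpos⟩ := hε
      filter_upwards [ae_restrict_mem measurableSet_Iio] with x hx
      rw [Real.norm_eq_abs, abs_mul]
      have hCb := Cx_bound hc hγ hpos h1 h2 (le_of_lt hx)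
      have hgb := hgbound ε hpos x (le_of_lt hx)
      have h4 : (0:ℝ) ≤ 4/c := by positivity
      exact mul_le_mul hCb hgb (abs_nonneg _) h4
    · exact (((integrableOn_exp_mul_Iic hρ 0).mono_set
        Iio_subset_Iic_self).const_mul (α/ρ)).const_mul (4/c)
    · filter_upwards [ae_restrict_mem measurableSet_Iio] with x hx
      have hCxl := Cx_tendsto (γ := γ) hc x
      have hbot : Tendsto (fun ε : ℝ => x - τ/ε) (𝓝[>] (0:ℝ)) atBot := by
        have h1 : Tendsto (fun ε : ℝ => τ/ε) (𝓝[>] (0:ℝ)) atTop := by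
          simpa [div_eq_mul_inv] using tendsto_inv_nhdsGT_zero.const_mul_atTop hτ
        have h2 : Tendsto (fun ε : ℝ => τ/ε + -x) (𝓝[>] (0:ℝ)) atTop :=
          tendsto_atTop_add_const_right _ _ h1
        have h3 := tendsto_neg_atTop_atBot.comp h2
        apply h3.congr
        intro ε
        simp [Function.comp]
        ring
      have hgl : Tendsto (fun ε : ℝ => ∫ y in (x - τ/ε)..x, K y) (𝓝[>] (0:ℝ))
          (𝓝 (∫ y in Iic x, K y)) :=
        intervalIntegral_tendsto_integral_Iic x hKI.integrableOn hbot
      exact hCxl.mul hgl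
  -- Step 2: the limit equals phiF via integration by parts
  have hkey : (∫ x in Iio (0:ℝ), Real.exp (x/c) / c * ∫ y in Iic x, K y) = phiF K c := by
    have hGderiv : ∀ x : ℝ, HasDerivAt (fun t => Real.exp (t/c) * ∫ y in Iic t, K y)
        (Real.exp (x/c)/c * (∫ y in Iic x, K y) + Real.exp (x/c) * K x) x := by
      intro x
      have he : HasDerivAt (fun t : ℝ => Real.exp (t/c)) (Real.exp (x/c)/c) x := by
        have h1 : HasDerivAt (fun t : ℝ => t/c) (1/c) x := (hasDerivAt_id x).div_const c
        have := (Real.hasDerivAt_exp (x/c)).comp x h1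
        simpa [div_eq_mul_inv, mul_comm, Function.comp_def] using this
      exact he.mul (hFderiv x)
    have hexple : ∀ x : ℝ, x ≤ 0 → Real.exp (x/c) ≤ 1 := by
      intro x hx
      rw [← Real.exp_zero]
      exact Real.exp_le_exp.2 (div_nonpos_of_nonpos_of_nonneg hx hc.le)
    have hint1 : IntegrableOn (fun x => Real.exp (x/c)/c * ∫ y in Iic x, K y) (Iic 0) := by
      apply Integrable.mono'
        (((integrableOn_exp_mul_Iic hρ 0).const_mul (α/ρ)).const_mul (1/c))
      · exact ((show Continuous fun x : ℝ => Real.exp (x/c) / c by fun_prop).mul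
          hFcont).aestronglyMeasurable
      · filter_upwards [ae_restrict_mem measurableSet_Iic] with x hx
        rw [Real.norm_eq_abs, abs_mul, abs_div, abs_of_pos (Real.exp_pos _), abs_of_pos hc]
        have hF := hFbound x hx
        have he := hexple x hx
        have hepos := Real.exp_pos (x/c)
        have hediv : Real.exp (x/c) / c ≤ 1 / c := by gcongr
        exact mul_le_mul hediv hF (abs_nonneg _) (by positivity)
    have hint2 : IntegrableOn (fun x => Real.exp (x/c) * K x) (Iic 0) := by
      apply Integrable.mono' hKI.abs.integrableOn
        ((show Continuous fun x : ℝ => Real.exp (x/c) * K x by fun_prop).aestronglyMeasurable)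
      filter_upwards [ae_restrict_mem measurableSet_Iic] with x hx
      rw [Real.norm_eq_abs, abs_mul, abs_of_pos (Real.exp_pos _)]
      have := hexple x hx
      nlinarith [abs_nonneg (K x)]
    have hGlim : Tendsto (fun t => Real.exp (t/c) * ∫ y in Iic t, K y) atBot (𝓝 0) := by
      have hb : Tendsto (fun t : ℝ => α/ρ * Real.exp (ρ * t)) atBot (𝓝 0) := by
        have hb' : Tendsto (fun t : ℝ => ρ * t) atBot atBot := tendsto_id.const_mul_atBot hρ
        simpa using ((Real.tendsto_exp_atBot.comp hb').const_mul (α/ρ))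
      apply squeeze_zero_norm' ?_ hb
      filter_upwards [eventually_le_atBot (0:ℝ)] with t ht
      rw [Real.norm_eq_abs, abs_mul, abs_of_pos (Real.exp_pos _)]
      have h1 := hexple t ht
      have h2 := hFbound t ht
      nlinarith [abs_nonneg (∫ y in Iic t, K y), Real.exp_pos (ρ * t)]
    have hibp := integral_Iic_of_hasDerivAt_of_tendsto' (a := 0)
      (fun x _ => hGderiv x) (hint1.add hint2) hGlim
    rw [integral_add hint1 hint2] at hibp
    have h00 : Real.exp ((0:ℝ)/c) = 1 := by rw [zero_div, Real.exp_zero]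
    rw [h00, one_mul, sub_zero] at hibp
    rw [phiF, ← integral_Iic_eq_integral_Iio, ← integral_Iic_eq_integral_Iio,
      ← integral_Iic_eq_integral_Iio]
    linarith
  rwa [hkey] at hmain
end

section
/- Fix τ > 0, c > 0 and γ > 0. Then g(τ,c,ε) → (1/(1+γ))·(γ + e^{−(1+γ)τ/c}) − φ_f(c) as ε → 0⁺. -/
open MeasureTheory Real Filter Set Topology

/-- Pulse speed index function `g(τ,c,ε) = U(τ/ε)`. -/
noncomputable def gg (K : ℝ → ℝ) (γ τ c ε : ℝ) : ℝ :=
  ∫ x in Iio (τ / ε), Cx γ (x - τ / ε) c ε * ∫ y in (x - τ / ε)..x, K y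

lemma integrableOn_exp_mul_Iio {k : ℝ} (hk : 0 < k) (x0 : ℝ) :
    IntegrableOn (fun u => Real.exp (k * u)) (Iio x0) := by
  rw [← Measure.map_neg_eq_self (volume : Measure ℝ)]
  have m : MeasurableEmbedding fun x : ℝ => -x := (Homeomorph.neg ℝ).measurableEmbedding
  rw [m.integrableOn_map_iff]
  simp only [Function.comp_def, neg_preimage, neg_Iio]
  exact ((exp_neg_integrableOn_Ioi (-x0) hk).congr_fun
    (fun x _ => by ring_nf) measurableSet_Ioi)

lemma integrable_exp_neg_mul_abs {ρ : ℝ} (hρ : 0 < ρ) :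
    Integrable (fun x => Real.exp (-ρ * |x|)) := by
  have hf : IntegrableOn (fun x => Real.exp (-ρ * |x|)) (Ioi 0) :=
    (exp_neg_integrableOn_Ioi 0 hρ).congr_fun
      (fun x hx => by rw [abs_of_pos (by exact hx)]) measurableSet_Ioi
  have hIio : IntegrableOn (fun x => Real.exp (-ρ * |x|)) (Iio 0) :=
    (integrableOn_exp_mul_Iio hρ 0).congr_fun
      (fun x hx => by rw [abs_of_neg (by exact hx)]; ring_nf) measurableSet_Iio
  rw [← integrableOn_univ, ← Iio_union_Ici (a := (0:ℝ))]
  exact hIio.union (Iff.mpr integrableOn_Ici_iff_integrableOn_Ioi hf)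

lemma disc_tendsto (γ : ℝ) : Tendsto (fun ε : ℝ => (1 - γ*ε)^2 - 4*ε) (𝓝 0) (𝓝 1) := by
  have h : Continuous fun ε : ℝ => (1 - γ*ε)^2 - 4*ε := by continuity
  simpa using h.tendsto 0

lemma sqrtdisc_tendsto (γ : ℝ) :
    Tendsto (fun ε : ℝ => Real.sqrt ((1 - γ*ε)^2 - 4*ε)) (𝓝 0) (𝓝 1) := by
  simpa using (disc_tendsto γ).sqrt

lemma one_add_tendsto (γ : ℝ) : Tendsto (fun ε : ℝ => 1 + γ*ε) (𝓝 0) (𝓝 1) := by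
  have h : Continuous fun ε : ℝ => 1 + γ*ε := by continuity
  simpa using h.tendsto 0

lemma om1_tendsto (γ : ℝ) : Tendsto (fun ε => om1 γ ε) (𝓝 0) (𝓝 1) := by
  have h := ((one_add_tendsto γ).add (sqrtdisc_tendsto γ)).div_const 2
  norm_num at h; exact h

lemma om2_tendsto (γ : ℝ) : Tendsto (fun ε => om2 γ ε) (𝓝 0) (𝓝 0) := by
  have h := ((one_add_tendsto γ).sub (sqrtdisc_tendsto γ)).div_const 2
  norm_num at h; exact h

lemma om_id {γ ε : ℝ} (hγ : 0 < γ) (hε : 0 < ε) (hγε : γ * ε < 1)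
    (hD : 0 ≤ (1 - γ*ε)^2 - 4*ε) :
    om2 γ ε = 2*(1+γ)/(1 + γ*ε + Real.sqrt ((1-γ*ε)^2-4*ε)) * ε ∧
    1 - om1 γ ε = 2/(1 - γ*ε + Real.sqrt ((1-γ*ε)^2-4*ε)) * ε := by
  set s := Real.sqrt ((1-γ*ε)^2-4*ε) with hs
  have hs0 : 0 ≤ s := Real.sqrt_nonneg _
  have hs2 : s^2 = (1-γ*ε)^2-4*ε := Real.sq_sqrt hD
  have hd1 : (0:ℝ) < 1 + γ*ε + s := by positivity
  have hd2 : (0:ℝ) < 1 - γ*ε + s := by nlinarith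
  constructor
  · unfold om2; rw [div_mul_eq_mul_div, eq_div_iff hd1.ne']; nlinarith [hs2]
  · unfold om1; rw [div_mul_eq_mul_div, eq_div_iff hd2.ne']; nlinarith [hs2]

lemma ev_basic (γ : ℝ) (hγ : 0 < γ) : ∀ᶠ ε in 𝓝[>] (0:ℝ),
    0 < ε ∧ γ * ε < 1 ∧ (1:ℝ)/4 ≤ (1 - γ*ε)^2 - 4*ε := by
  have h1 : ∀ᶠ ε in 𝓝 (0:ℝ), γ * ε < 1 := by
    have h : Tendsto (fun ε : ℝ => γ * ε) (𝓝 0) (𝓝 0) := by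
      have : Continuous fun ε : ℝ => γ * ε := by continuity
      simpa using this.tendsto 0
    exact h.eventually (eventually_lt_nhds one_pos)
  have h2 : ∀ᶠ ε in 𝓝 (0:ℝ), (1:ℝ)/4 ≤ (1 - γ*ε)^2 - 4*ε :=
    (disc_tendsto γ).eventually (eventually_ge_nhds (by norm_num))
  filter_upwards [self_mem_nhdsWithin, eventually_nhdsWithin_of_eventually_nhds h1,
    eventually_nhdsWithin_of_eventually_nhds h2] with ε he ha hb
  exact ⟨he, ha, hb⟩

lemma om2_ratio_tendsto (γ : ℝ) (hγ : 0 < γ) :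
    Tendsto (fun ε => om2 γ ε / ε) (𝓝[>] (0:ℝ)) (𝓝 (1+γ)) := by
  have hden : Tendsto (fun ε : ℝ => 1 + γ*ε + Real.sqrt ((1-γ*ε)^2-4*ε)) (𝓝[>] (0:ℝ)) (𝓝 2) := by
    have := ((one_add_tendsto γ).add (sqrtdisc_tendsto γ)).mono_left
      (nhdsWithin_le_nhds (s := Ioi (0:ℝ)))
    norm_num at this; exact this
  have hmain : Tendsto (fun ε : ℝ => 2*(1+γ)/(1 + γ*ε + Real.sqrt ((1-γ*ε)^2-4*ε)))
      (𝓝[>] (0:ℝ)) (𝓝 (1+γ)) := by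
    have := (tendsto_const_nhds (x := 2*(1+γ)) (f := 𝓝[>] (0:ℝ))).div hden two_ne_zero
    convert this using 2
    · rfl
    · ring
  refine hmain.congr' ?_
  filter_upwards [ev_basic γ hγ] with ε ⟨hε, hγε, hD⟩
  rw [(om_id hγ hε hγε (by linarith)).1, mul_div_assoc (c := ε)]; rw [div_self hε.ne', mul_one]

lemma om1_ratio_tendsto (γ : ℝ) (hγ : 0 < γ) :
    Tendsto (fun ε => (1 - om1 γ ε) / ε) (𝓝[>] (0:ℝ)) (𝓝 1) := by
  have hden : Tendsto (fun ε : ℝ => 1 - γ*ε + Real.sqrt ((1-γ*ε)^2-4*ε)) (𝓝[>] (0:ℝ)) (𝓝 2) := by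
    have h : Continuous fun ε : ℝ => 1 - γ*ε := by continuity
    have h' : Tendsto (fun ε : ℝ => 1 - γ*ε) (𝓝 0) (𝓝 1) := by simpa using h.tendsto 0
    have := (h'.add (sqrtdisc_tendsto γ)).mono_left (nhdsWithin_le_nhds (s := Ioi (0:ℝ)))
    norm_num at this; exact this
  have hmain : Tendsto (fun ε : ℝ => 2/(1 - γ*ε + Real.sqrt ((1-γ*ε)^2-4*ε)))
      (𝓝[>] (0:ℝ)) (𝓝 1) := by
    have := (tendsto_const_nhds (x := (2:ℝ)) (f := 𝓝[>] (0:ℝ))).div hden two_ne_zero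
    convert this using 2 <;> norm_num
  refine hmain.congr' ?_
  filter_upwards [ev_basic γ hγ] with ε ⟨hε, hγε, hD⟩
  rw [(om_id hγ hε hγε (by linarith)).2, mul_div_assoc (c := ε)]; rw [div_self hε.ne', mul_one]

lemma ev_om (γ : ℝ) (hγ : 0 < γ) : ∀ᶠ ε in 𝓝[>] (0:ℝ),
    0 < ε ∧ (1:ℝ)/2 ≤ om1 γ ε ∧ 0 < om2 γ ε ∧ (1+γ)/2 ≤ om2 γ ε / ε ∧
      (1:ℝ)/2 ≤ om1 γ ε - om2 γ ε := by
  have hr := (om2_ratio_tendsto γ hγ).eventually (eventually_ge_nhds (by linarith : (1+γ)/2 < 1+γ))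
  filter_upwards [ev_basic γ hγ, hr] with ε ⟨hε, hγε, hD⟩ hr2
  have hs0 : 0 ≤ Real.sqrt ((1-γ*ε)^2-4*ε) := Real.sqrt_nonneg _
  refine ⟨hε, ?_, ?_, hr2, ?_⟩
  · unfold om1; nlinarith
  · have : 0 < om2 γ ε / ε := lt_of_lt_of_le (by positivity) hr2
    have := mul_pos this hε
    rwa [div_mul_cancel₀ _ hε.ne'] at this
  · have h12 : (1:ℝ)/2 ≤ Real.sqrt ((1-γ*ε)^2-4*ε) := by
      rw [show (1:ℝ)/2 = Real.sqrt (1/4) by rw [show (1:ℝ)/4 = (1/2)^2 by norm_num, Real.sqrt_sq]; norm_num]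
      exact Real.sqrt_le_sqrt hD
    unfold om1 om2; linarith

section Kfacts
variable {K : ℝ → ℝ} (hKc : Continuous K) (hKI : Integrable K)

lemma Tdiv_atTop {τ : ℝ} (hτ : 0 < τ) : Tendsto (fun ε : ℝ => τ / ε) (𝓝[>] (0:ℝ)) atTop := by
  simp only [div_eq_mul_inv]
  exact Tendsto.const_mul_atTop hτ tendsto_inv_nhdsGT_zero

lemma vdiv_atBot {v : ℝ} (hv : v < 0) : Tendsto (fun ε : ℝ => v / ε) (𝓝[>] (0:ℝ)) atBot := by
  have h : Tendsto (fun ε : ℝ => (-v) / ε) (𝓝[>] (0:ℝ)) atTop := Tdiv_atTop (by linarith)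
  have := tendsto_neg_atTop_atBot.comp h
  refine this.congr (fun ε => ?_)
  simp [Function.comp, neg_div]

include hKI in
lemma Hlim (τ : ℝ) (hτ : 0 < τ) (u : ℝ) :
    Tendsto (fun ε => ∫ y in u..(u + τ/ε), K y) (𝓝[>] (0:ℝ)) (𝓝 (∫ y in Ioi u, K y)) := by
  refine intervalIntegral_tendsto_integral_Ioi u hKI.integrableOn ?_
  exact tendsto_atTop_add_const_left _ u (Tdiv_atTop hτ)

include hKI in
lemma Hlim2_mid {τ v : ℝ} (hτ : 0 < τ) (hv1 : -τ < v) (hv2 : v < 0) :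
    Tendsto (fun ε => ∫ y in (v/ε)..((v+τ)/ε), K y) (𝓝[>] (0:ℝ)) (𝓝 (∫ x, K x)) :=
  intervalIntegral_tendsto_integral hKI (vdiv_atBot hv2) (Tdiv_atTop (by linarith))

include hKI in
lemma Hlim2_left {τ v : ℝ} (hτ : 0 < τ) (hv : v < -τ) :
    Tendsto (fun ε => ∫ y in (v/ε)..((v+τ)/ε), K y) (𝓝[>] (0:ℝ)) (𝓝 0) := by
  have h1 : Tendsto (fun ε => ∫ y in (v/ε)..(0:ℝ), K y) (𝓝[>] (0:ℝ)) (𝓝 (∫ y in Iic 0, K y)) :=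
    intervalIntegral_tendsto_integral_Iic 0 hKI.integrableOn (vdiv_atBot (by linarith))
  have h2 : Tendsto (fun ε => ∫ y in ((v+τ)/ε)..(0:ℝ), K y) (𝓝[>] (0:ℝ)) (𝓝 (∫ y in Iic 0, K y)) :=
    intervalIntegral_tendsto_integral_Iic 0 hKI.integrableOn (vdiv_atBot (by linarith))
  have h := h1.sub h2
  rw [sub_self] at h
  refine h.congr (fun ε => ?_)
  rw [← intervalIntegral.integral_add_adjacent_intervals
    (hKI.intervalIntegrable) (hKI.intervalIntegrable (a := (v+τ)/ε) (b := 0))]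
  ring

include hKI in
lemma absH_le (M : ℝ) (hM : M = ∫ x, |K x|) {a b : ℝ} (hab : a ≤ b) :
    |∫ y in a..b, K y| ≤ M := by
  calc |∫ y in a..b, K y| ≤ ∫ y in a..b, |K y| := intervalIntegral.abs_integral_le_integral_abs hab
    _ = ∫ y in Ioc a b, |K y| := by rw [intervalIntegral.integral_of_le hab]
    _ ≤ ∫ y, |K y| := setIntegral_le_integral hKI.abs (ae_of_all _ fun x => abs_nonneg _)
    _ = M := hM.symm

end Kfacts

lemma shift_integral (f : ℝ → ℝ) (T : ℝ) :
    ∫ x in Iio T, f (x - T) = ∫ u in Iio (0:ℝ), f u := by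
  rw [← integral_indicator measurableSet_Iio, ← integral_indicator measurableSet_Iio]
  rw [← integral_sub_right_eq_self (fun x => (Iio (0:ℝ)).indicator f x) T]
  congr 1
  funext x
  by_cases h : x < T
  · simp [Set.indicator_apply, h, sub_neg.mpr h]
  · simp [Set.indicator_apply, h, fun hh => h (sub_neg.mp hh)]

lemma scale_integral (f : ℝ → ℝ) {ε : ℝ} (hε : 0 < ε) :
    ∫ u in Iio (0:ℝ), f u = ε⁻¹ * ∫ v in Iio (0:ℝ), f (v / ε) := by
  rw [← integral_indicator measurableSet_Iio, ← integral_indicator measurableSet_Iio]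
  have h1 : ∀ v : ℝ, (Iio (0:ℝ)).indicator (fun v => f (v/ε)) v
      = (Iio (0:ℝ)).indicator f (v/ε) := by
    intro v
    by_cases h : v < 0
    · simp [Set.indicator_apply, h, div_neg_of_neg_of_pos h hε]
    · push_neg at h
      simp [Set.indicator_apply, not_lt.mpr h, not_lt.mpr (div_nonneg h hε.le)]
  simp_rw [h1]
  rw [MeasureTheory.Measure.integral_comp_div (fun x => (Iio (0:ℝ)).indicator f x) ε]
  rw [abs_of_pos hε, smul_eq_mul, ← mul_assoc, inv_mul_cancel₀ hε.ne', one_mul]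

section Phi
variable {K : ℝ → ℝ} (hKc : Continuous K) (hKI : Integrable K) {c : ℝ} (hc : 0 < c)

include hKI in
lemma Phi_eq (u : ℝ) : (∫ y in Ioi u, K y)
    = (∫ x, K x) - ((∫ x in Iic (0:ℝ), K x) + ∫ y in (0:ℝ)..u, K y) := by
  have h1 : (∫ x in Iic u, K x) + ∫ x in Ioi u, K x = ∫ x, K x :=
    intervalIntegral.integral_Iic_add_Ioi hKI.integrableOn hKI.integrableOn
  have h2 : (∫ x in Iic u, K x) - ∫ x in Iic (0:ℝ), K x = ∫ y in (0:ℝ)..u, K y :=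
    intervalIntegral.integral_Iic_sub_Iic hKI.integrableOn hKI.integrableOn
  linarith

include hKc hKI in
lemma Phi_hasDeriv (u : ℝ) : HasDerivAt (fun u => ∫ y in Ioi u, K y) (-K u) u := by
  have hP : HasDerivAt (fun b => ∫ y in (0:ℝ)..b, K y) (K u) u :=
    intervalIntegral.integral_hasDerivAt_right (hKI.intervalIntegrable)
      (hKc.stronglyMeasurableAtFilter _ _) hKc.continuousAt
  have h : HasDerivAt (fun u => (∫ x, K x) - ((∫ x in Iic (0:ℝ), K x) + ∫ y in (0:ℝ)..u, K y))
      (-K u) u := by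
    simpa using ((hP.const_add (∫ x in Iic (0:ℝ), K x)).const_sub (∫ x, K x))
  exact h.congr_of_eventuallyEq (Filter.Eventually.of_forall (Phi_eq hKI))

include hKI in
lemma Phi_bound (M : ℝ) (hM : M = ∫ x, |K x|) (u : ℝ) : |∫ y in Ioi u, K y| ≤ M := by
  calc |∫ y in Ioi u, K y| ≤ ∫ y in Ioi u, |K y| := by
        simpa using norm_integral_le_integral_norm (μ := volume.restrict (Ioi u)) K
    _ ≤ ∫ y, |K y| := setIntegral_le_integral hKI.abs (ae_of_all _ fun x => abs_nonneg _)
    _ = M := hM.symm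

include hKc hKI in
omit hKc in
lemma Phi_continuous : Continuous (fun u => ∫ y in Ioi u, K y) := by
  have : Continuous (fun u => (∫ x, K x) - ((∫ x in Iic (0:ℝ), K x) + ∫ y in (0:ℝ)..u, K y)) := by
    exact continuous_const.sub (continuous_const.add
      (intervalIntegral.continuous_primitive (fun a b => hKI.intervalIntegrable) 0))
  exact this.congr (fun u => (Phi_eq hKI u).symm)
end Phi

lemma integrableOn_exp_mul_Iic'_s6 {k : ℝ} (hk : 0 < k) (x0 : ℝ) :
    IntegrableOn (fun u => Real.exp (k * u)) (Iic x0) := by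
  rw [integrableOn_Iic_iff_integrableOn_Iio]
  exact integrableOn_exp_mul_Iio hk x0

section Parts
variable {K : ℝ → ℝ} (hKc : Continuous K) (hKI : Integrable K) {c : ℝ} (hc : 0 < c)

include hKc hKI hc in
lemma J1_eq (hKint : (∫ x, K x) = 1) (M : ℝ) (hM : M = ∫ x, |K x|) :
    ∫ u in Iio (0:ℝ), Real.exp (u/c) * (∫ y in Ioi u, K y)
      = c * ((1:ℝ) - ((∫ x in Iio (0:ℝ), K x) - ∫ x in Iio (0:ℝ), Real.exp (x/c) * K x)) := by
  set Φ : ℝ → ℝ := fun u => ∫ y in Ioi u, K y with hΦ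
  have hMnn : 0 ≤ M := hM ▸ integral_nonneg (fun x => abs_nonneg _)
  have hF : ∀ u, HasDerivAt (fun u => c * (Real.exp (u/c) * Φ u))
      (Real.exp (u/c) * Φ u - c * (Real.exp (u/c) * K u)) u := by
    intro u
    have h1 : HasDerivAt (fun u : ℝ => u/c) (1/c) u := by
      simpa using (hasDerivAt_id u).div_const c
    have he : HasDerivAt (fun u : ℝ => Real.exp (u/c)) (Real.exp (u/c) * (1/c)) u := h1.exp
    have := (he.mul (Phi_hasDeriv hKc hKI u)).const_mul c
    refine this.congr_deriv ?_
    have hc0 : c * (1/c) = 1 := by field_simp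
    linear_combination (Real.exp (u/c) * Φ u) * hc0
  have hcont : Continuous (fun u => Real.exp (u/c) * Φ u) :=
    (Real.continuous_exp.comp (continuous_id.div_const c)).mul (Phi_continuous hKI)
  have hint1 : IntegrableOn (fun u => Real.exp (u/c) * Φ u) (Iic 0) := by
    refine Integrable.mono' ((integrableOn_exp_mul_Iic'_s6 (k := 1/c) (by positivity) 0).const_mul M)
      hcont.aestronglyMeasurable ?_
    refine ae_of_all _ (fun u => ?_)
    rw [Real.norm_eq_abs, abs_mul, abs_of_pos (Real.exp_pos _)]
    calc Real.exp (u/c) * |Φ u| ≤ Real.exp (u/c) * M :=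
          mul_le_mul_of_nonneg_left (Phi_bound hKI M hM u) (Real.exp_pos _).le
      _ = M * Real.exp (1/c * u) := by rw [mul_comm]; congr 1; congr 1; ring
  have hint2' : IntegrableOn (fun u => Real.exp (u/c) * K u) (Iic 0) := by
    refine Integrable.mono' hKI.abs.integrableOn
      ((Real.continuous_exp.comp (continuous_id.div_const c)).mul hKc).aestronglyMeasurable ?_
    filter_upwards [ae_restrict_mem measurableSet_Iic] with u hu
    rw [Real.norm_eq_abs, abs_mul, abs_of_pos (Real.exp_pos _)]
    calc Real.exp (u/c) * |K u| ≤ 1 * |K u| := by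
          apply mul_le_mul_of_nonneg_right _ (abs_nonneg _)
          rw [← Real.exp_zero]
          exact Real.exp_le_exp.mpr (div_nonpos_of_nonpos_of_nonneg hu hc.le)
      _ = |K u| := one_mul _
  have hint2 : IntegrableOn (fun u => c * (Real.exp (u/c) * K u)) (Iic 0) := hint2'.const_mul c
  have htend : Tendsto (fun u => c * (Real.exp (u/c) * Φ u)) atBot (𝓝 0) := by
    have hexp : Tendsto (fun u : ℝ => Real.exp (u/c)) atBot (𝓝 0) :=
      Real.tendsto_exp_atBot.comp (tendsto_id.atBot_div_const hc)
    have hg : Tendsto (fun u : ℝ => c * M * Real.exp (u/c)) atBot (𝓝 0) := by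
      have := hexp.const_mul (c * M)
      simpa using this
    refine squeeze_zero_norm (fun u => ?_) hg
    rw [Real.norm_eq_abs, abs_mul, abs_mul, abs_of_pos hc, abs_of_pos (Real.exp_pos _)]
    calc c * (Real.exp (u/c) * |Φ u|) ≤ c * (Real.exp (u/c) * M) := by
          apply mul_le_mul_of_nonneg_left _ hc.le
          exact mul_le_mul_of_nonneg_left (Phi_bound hKI M hM u) (Real.exp_pos _).le
      _ = c * M * Real.exp (u/c) := by ring
  have key := integral_Iic_of_hasDerivAt_of_tendsto' (a := 0)
    (fun x _ => hF x) (hint1.sub hint2) htend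
  rw [MeasureTheory.integral_sub hint1 hint2, integral_const_mul] at key
  have hPhi0 : Φ 0 = 1 - ∫ x in Iio (0:ℝ), K x := by
    have h1 : (∫ x in Iio (0:ℝ), K x) + ∫ x in Ici (0:ℝ), K x = ∫ x, K x :=
      intervalIntegral.integral_Iio_add_Ici hKI.integrableOn hKI.integrableOn
    have h2 : (∫ x in Ici (0:ℝ), K x) = ∫ x in Ioi (0:ℝ), K x :=
      integral_Ici_eq_integral_Ioi
    simp only [hΦ]
    rw [← h2]
    linarith [hKint ▸ h1]
  rw [integral_Iic_eq_integral_Iio, integral_Iic_eq_integral_Iio] at key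
  rw [hPhi0] at key
  simp only [zero_div, Real.exp_zero, one_mul, sub_zero] at key
  have hgoal : (∫ u in Iio (0:ℝ), Real.exp (u/c) * ∫ y in Ioi u, K y)
      = ∫ u in Iio (0:ℝ), Real.exp (u/c) * Φ u := rfl
  rw [hgoal]
  linarith
end Parts

lemma J2_eq {τ c γ : ℝ} (hτ : 0 < τ) (hc : 0 < c) (hγ : 0 < γ) :
    ∫ v in Iio (0:ℝ), (Ioi (-τ)).indicator (fun v => Real.exp ((1+γ)*v/c)) v
      = c/(1+γ) * (1 - Real.exp (-(1+γ)*τ/c)) := by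
  rw [integral_indicator measurableSet_Ioi, Measure.restrict_restrict measurableSet_Ioi,
    Ioi_inter_Iio, ← integral_Ioc_eq_integral_Ioo,
    ← intervalIntegral.integral_of_le (by linarith : -τ ≤ (0:ℝ))]
  have h1γ : (0:ℝ) < 1 + γ := by linarith
  have hFTC := intervalIntegral.integral_eq_sub_of_hasDerivAt
    (f := fun v => c/(1+γ) * Real.exp ((1+γ)*v/c))
    (f' := fun v => Real.exp ((1+γ)*v/c)) (a := -τ) (b := 0)
    (fun x _ => by
      have h1 : HasDerivAt (fun v : ℝ => (1+γ)*v/c) ((1+γ)/c) x := by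
        simpa using ((hasDerivAt_id x).const_mul (1+γ)).div_const c
      have h2 := (h1.exp).const_mul (c/(1+γ))
      refine h2.congr_deriv ?_
      have hc0 : c/(1+γ) * ((1+γ)/c) = 1 := by field_simp
      linear_combination (Real.exp ((1+γ)*x/c)) * hc0)
    (by
      apply Continuous.intervalIntegrable
      exact Real.continuous_exp.comp (by continuity))
  rw [hFTC]
  rw [show (1+γ)*(0:ℝ)/c = 0 by ring, show (1+γ)*(-τ)/c = -(1+γ)*τ/c by ring, Real.exp_zero]
  ring

section DCT
variable {K : ℝ → ℝ} (hKc : Continuous K) (hKI : Integrable K)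

include hKI in
lemma contH (T : ℝ) : Continuous fun u => ∫ y in u..(u+T), K y := by
  have hP : Continuous fun b => ∫ y in (0:ℝ)..b, K y :=
    intervalIntegral.continuous_primitive (fun a b => hKI.intervalIntegrable) 0
  have h : ∀ u : ℝ, ∫ y in u..(u+T), K y
      = (∫ y in (0:ℝ)..(u+T), K y) - ∫ y in (0:ℝ)..u, K y := by
    intro u
    rw [← intervalIntegral.integral_add_adjacent_intervals
      (hKI.intervalIntegrable (a := (0:ℝ)) (b := u)) (hKI.intervalIntegrable)]
    ring
  exact ((hP.comp (continuous_id.add continuous_const)).sub hP).congr fun u => (h u).symm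

include hKI in
lemma contH2 {ε : ℝ} (τ : ℝ) : Continuous fun v => ∫ y in (v/ε)..((v+τ)/ε), K y := by
  have hP : Continuous fun b => ∫ y in (0:ℝ)..b, K y :=
    intervalIntegral.continuous_primitive (fun a b => hKI.intervalIntegrable) 0
  have h : ∀ v : ℝ, ∫ y in (v/ε)..((v+τ)/ε), K y
      = (∫ y in (0:ℝ)..((v+τ)/ε), K y) - ∫ y in (0:ℝ)..(v/ε), K y := by
    intro v
    rw [← intervalIntegral.integral_add_adjacent_intervals
      (hKI.intervalIntegrable (a := (0:ℝ)) (b := v/ε)) (hKI.intervalIntegrable)]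
    ring
  exact ((hP.comp ((continuous_id.add continuous_const).div_const ε)).sub
    (hP.comp (continuous_id.div_const ε))).congr fun v => (h v).symm

include hKc hKI in
lemma tendsto_I1 {τ c γ : ℝ} (hτ : 0 < τ) (hc : 0 < c) (hγ : 0 < γ) (M : ℝ) (hM : M = ∫ x, |K x|) :
    Tendsto (fun ε => ∫ u in Iio (0:ℝ), Real.exp (om1 γ ε * u / c) * ∫ y in u..(u+τ/ε), K y)
      (𝓝[>] (0:ℝ)) (𝓝 (∫ u in Iio (0:ℝ), Real.exp (u/c) * ∫ y in Ioi u, K y)) := by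
  apply tendsto_integral_filter_of_dominated_convergence
    (bound := fun u => M * Real.exp (1/(2*c) * u))
  · filter_upwards [] with ε
    exact ((Real.continuous_exp.comp ((continuous_const.mul continuous_id).div_const c)).mul
      (contH hKI (τ/ε))).aestronglyMeasurable
  · filter_upwards [ev_om γ hγ] with ε ⟨hε, hom1, _, _, _⟩
    filter_upwards [ae_restrict_mem measurableSet_Iio] with u hu
    rw [Real.norm_eq_abs, abs_mul, abs_of_pos (Real.exp_pos _)]
    have hH : |∫ y in u..(u+τ/ε), K y| ≤ M :=
      absH_le hKI M hM (by nlinarith [div_pos hτ hε])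
    calc Real.exp (om1 γ ε * u / c) * |∫ y in u..(u+τ/ε), K y|
        ≤ Real.exp (om1 γ ε * u / c) * M :=
          mul_le_mul_of_nonneg_left hH (Real.exp_pos _).le
      _ ≤ Real.exp (1/(2*c) * u) * M := by
          apply mul_le_mul_of_nonneg_right _ (hM ▸ integral_nonneg fun x => abs_nonneg _)
          apply Real.exp_le_exp.mpr
          rw [div_le_iff₀ hc, show 1/(2*c)*u*c = 1/2*u from by field_simp]
          exact mul_le_mul_of_nonpos_right hom1 (le_of_lt hu)
      _ = M * Real.exp (1/(2*c) * u) := mul_comm _ _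
  · exact (integrableOn_exp_mul_Iio (by positivity) 0).const_mul M
  · refine ae_of_all _ (fun u => ?_)
    have hexp : Tendsto (fun ε => Real.exp (om1 γ ε * u / c)) (𝓝[>] (0:ℝ))
        (𝓝 (Real.exp (u/c))) := by
      have h := ((((om1_tendsto γ).mono_left (nhdsWithin_le_nhds (s := Ioi (0:ℝ)))).mul_const u).div_const c)
      rw [one_mul] at h
      exact (Real.continuous_exp.continuousAt.tendsto).comp h
    exact hexp.mul (Hlim hKI τ hτ u)
end DCT

section DCT2
variable {K : ℝ → ℝ} (hKI : Integrable K)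

include hKI in
lemma tendsto_I2 {τ c γ : ℝ} (hτ : 0 < τ) (hc : 0 < c) (hγ : 0 < γ)
    (hKint : (∫ x, K x) = 1) (M : ℝ) (hM : M = ∫ x, |K x|) :
    Tendsto (fun ε => ∫ v in Iio (0:ℝ),
        Real.exp ((om2 γ ε / ε) * v / c) * ∫ y in (v/ε)..((v+τ)/ε), K y)
      (𝓝[>] (0:ℝ))
      (𝓝 (∫ v in Iio (0:ℝ), (Ioi (-τ)).indicator (fun v => Real.exp ((1+γ)*v/c)) v)) := by
  apply tendsto_integral_filter_of_dominated_convergence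
    (bound := fun v => M * Real.exp ((1+γ)/(2*c) * v))
  · filter_upwards [] with ε
    exact ((Real.continuous_exp.comp ((continuous_const.mul continuous_id).div_const c)).mul
      (contH2 hKI τ)).aestronglyMeasurable
  · filter_upwards [ev_om γ hγ] with ε ⟨hε, _, hom2pos, hom2r, _⟩
    filter_upwards [ae_restrict_mem measurableSet_Iio] with v hv
    rw [Real.norm_eq_abs, abs_mul, abs_of_pos (Real.exp_pos _)]
    have hH : |∫ y in (v/ε)..((v+τ)/ε), K y| ≤ M :=
      absH_le hKI M hM (by gcongr <;> linarith)
    calc Real.exp ((om2 γ ε / ε) * v / c) * |∫ y in (v/ε)..((v+τ)/ε), K y|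
        ≤ Real.exp ((om2 γ ε / ε) * v / c) * M :=
          mul_le_mul_of_nonneg_left hH (Real.exp_pos _).le
      _ ≤ Real.exp ((1+γ)/(2*c) * v) * M := by
          apply mul_le_mul_of_nonneg_right _ (hM ▸ integral_nonneg fun x => abs_nonneg _)
          apply Real.exp_le_exp.mpr
          rw [div_le_iff₀ hc, show (1+γ)/(2*c)*v*c = (1+γ)/2*v from by field_simp]
          exact mul_le_mul_of_nonpos_right hom2r (le_of_lt hv)
      _ = M * Real.exp ((1+γ)/(2*c) * v) := mul_comm _ _
  · exact (integrableOn_exp_mul_Iio (by positivity) 0).const_mul M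
  · have hne : ∀ᵐ v : ℝ, v ≠ -τ := by
      rw [ae_iff]
      have : {v : ℝ | ¬ v ≠ -τ} = {-τ} := by ext v; simp
      rw [this]
      exact measure_singleton _
    filter_upwards [ae_restrict_mem measurableSet_Iio, ae_restrict_of_ae hne] with v hv hvne
    have hexp : Tendsto (fun ε => Real.exp ((om2 γ ε / ε) * v / c)) (𝓝[>] (0:ℝ))
        (𝓝 (Real.exp ((1+γ)*v/c))) := by
      have h := ((om2_ratio_tendsto γ hγ).mul_const v).div_const c
      exact (Real.continuous_exp.continuousAt.tendsto).comp h
    rcases lt_or_gt_of_ne hvne with hlt | hgt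
    · -- v < -τ : indicator is 0
      rw [indicator_of_notMem (by simpa using hlt.le)]
      have := hexp.mul (Hlim2_left hKI hτ hlt)
      simpa using this
    · -- v > -τ : indicator is exp
      rw [indicator_of_mem (by exact hgt)]
      have := hexp.mul (Hlim2_mid hKI hτ hgt hv)
      rw [hKint] at this
      simpa using this
end DCT2

theorem statement6 (K : ℝ → ℝ)
    (hK : Continuous K)
    (hKdecay : ∃ α > (0:ℝ), ∃ ρ > (0:ℝ), ∀ x : ℝ, |K x| ≤ α * Real.exp (-ρ * |x|))
    (hKint : (∫ x : ℝ, K x) = 1)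
    (τ c γ : ℝ) (hτ : 0 < τ) (hc : 0 < c) (hγ : 0 < γ) :
    Tendsto (fun ε => gg K γ τ c ε) (𝓝[>] (0:ℝ))
      (𝓝 ((1 / (1 + γ)) * (γ + Real.exp (-(1 + γ) * τ / c)) - phiF K c)) := by
  obtain ⟨α, hα, ρ, hρ, hbound⟩ := hKdecay
  have hKI : Integrable K :=
    Integrable.mono' ((integrable_exp_neg_mul_abs hρ).const_mul α)
      hK.aestronglyMeasurable (ae_of_all _ fun x => by simpa using hbound x)
  set M := ∫ x, |K x| with hM
  have hMnn : 0 ≤ M := integral_nonneg fun x => abs_nonneg _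
  have h1γ : (0:ℝ) < 1 + γ := by linarith
  have hgg : ∀ᶠ ε in 𝓝[>] (0:ℝ), gg K γ τ c ε
      = ((1 - om2 γ ε)/(c*(om1 γ ε - om2 γ ε)))
          * (∫ u in Iio (0:ℝ), Real.exp (om1 γ ε * u / c) * ∫ y in u..(u+τ/ε), K y)
        - ((1 - om1 γ ε)/ε) * ((1/(c*(om1 γ ε - om2 γ ε)))
          * (∫ v in Iio (0:ℝ),
              Real.exp ((om2 γ ε/ε) * v / c) * ∫ y in (v/ε)..((v+τ)/ε), K y)) := by
    filter_upwards [ev_om γ hγ] with ε ⟨hε, hom1, hom2pos, hom2r, hs⟩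
    have hshift : gg K γ τ c ε
        = ∫ u in Iio (0:ℝ), Cx γ u c ε * ∫ y in u..(u+τ/ε), K y := by
      simp only [gg]
      rw [← shift_integral (fun u => Cx γ u c ε * ∫ y in u..(u+τ/ε), K y) (τ/ε)]
      refine setIntegral_congr_fun measurableSet_Iio (fun x _ => ?_)
      rw [sub_add_cancel]
    have Ia : IntegrableOn
        (fun u => Real.exp (om1 γ ε * u / c) * ∫ y in u..(u+τ/ε), K y) (Iio 0) := by
      refine Integrable.mono'
        ((integrableOn_exp_mul_Iio (k := om1 γ ε / c) (by positivity) 0).const_mul M)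
        (((Real.continuous_exp.comp
          ((continuous_const.mul continuous_id).div_const c)).mul
            (contH hKI (τ/ε))).aestronglyMeasurable) ?_
      filter_upwards [ae_restrict_mem measurableSet_Iio] with u hu
      rw [Real.norm_eq_abs, abs_mul, abs_of_pos (Real.exp_pos _)]
      have hH : |∫ y in u..(u+τ/ε), K y| ≤ M :=
        absH_le hKI M hM (by nlinarith [div_pos hτ hε])
      calc Real.exp (om1 γ ε * u / c) * |∫ y in u..(u+τ/ε), K y|
          ≤ Real.exp (om1 γ ε * u / c) * M :=
            mul_le_mul_of_nonneg_left hH (Real.exp_pos _).le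
        _ = M * Real.exp (om1 γ ε / c * u) := by rw [mul_comm]; congr 1; ring
    have Ib : IntegrableOn
        (fun u => Real.exp (om2 γ ε * u / c) * ∫ y in u..(u+τ/ε), K y) (Iio 0) := by
      refine Integrable.mono'
        ((integrableOn_exp_mul_Iio (k := om2 γ ε / c) (by positivity) 0).const_mul M)
        (((Real.continuous_exp.comp
          ((continuous_const.mul continuous_id).div_const c)).mul
            (contH hKI (τ/ε))).aestronglyMeasurable) ?_
      filter_upwards [ae_restrict_mem measurableSet_Iio] with u hu
      rw [Real.norm_eq_abs, abs_mul, abs_of_pos (Real.exp_pos _)]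
      have hH : |∫ y in u..(u+τ/ε), K y| ≤ M :=
        absH_le hKI M hM (by nlinarith [div_pos hτ hε])
      calc Real.exp (om2 γ ε * u / c) * |∫ y in u..(u+τ/ε), K y|
          ≤ Real.exp (om2 γ ε * u / c) * M :=
            mul_le_mul_of_nonneg_left hH (Real.exp_pos _).le
        _ = M * Real.exp (om2 γ ε / c * u) := by rw [mul_comm]; congr 1; ring
    have hsplit : ∀ u : ℝ, Cx γ u c ε * (∫ y in u..(u+τ/ε), K y)
        = ((1 - om2 γ ε)/(c*(om1 γ ε - om2 γ ε)))
            * (Real.exp (om1 γ ε * u / c) * ∫ y in u..(u+τ/ε), K y)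
          - ((1 - om1 γ ε)/(c*(om1 γ ε - om2 γ ε)))
            * (Real.exp (om2 γ ε * u / c) * ∫ y in u..(u+τ/ε), K y) := by
      intro u; simp only [Cx]; ring
    rw [hshift]
    simp_rw [hsplit]
    rw [MeasureTheory.integral_sub (Ia.const_mul _) (Ib.const_mul _),
      integral_const_mul, integral_const_mul]
    have hscale : (∫ u in Iio (0:ℝ), Real.exp (om2 γ ε * u / c) * ∫ y in u..(u+τ/ε), K y)
        = ε⁻¹ * ∫ v in Iio (0:ℝ),
            Real.exp ((om2 γ ε/ε) * v / c) * ∫ y in (v/ε)..((v+τ)/ε), K y := by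
      rw [scale_integral (fun u => Real.exp (om2 γ ε * u / c) * ∫ y in u..(u+τ/ε), K y) hε]
      congr 1
      refine setIntegral_congr_fun measurableSet_Iio (fun v _ => ?_)
      rw [show om2 γ ε * (v/ε) / c = (om2 γ ε/ε) * v / c from by ring,
        show v/ε + τ/ε = (v+τ)/ε from by ring]
    rw [hscale]
    ring
  have hom12 : Tendsto (fun ε => om1 γ ε - om2 γ ε) (𝓝[>] (0:ℝ)) (𝓝 1) := by
    have h := ((om1_tendsto γ).sub (om2_tendsto γ)).mono_left
      (nhdsWithin_le_nhds (s := Ioi (0:ℝ)))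
    simpa using h
  have hden : Tendsto (fun ε => c*(om1 γ ε - om2 γ ε)) (𝓝[>] (0:ℝ)) (𝓝 c) := by
    have h := hom12.const_mul c
    simpa using h
  have hA : Tendsto (fun ε => (1 - om2 γ ε)/(c*(om1 γ ε - om2 γ ε))) (𝓝[>] (0:ℝ))
      (𝓝 (1/c)) := by
    have hnum : Tendsto (fun ε => 1 - om2 γ ε) (𝓝[>] (0:ℝ)) (𝓝 1) := by
      have h := ((om2_tendsto γ).mono_left (nhdsWithin_le_nhds (s := Ioi (0:ℝ)))).const_sub 1
      simpa using h
    exact hnum.div hden hc.ne'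
  have hB : Tendsto (fun ε => 1/(c*(om1 γ ε - om2 γ ε))) (𝓝[>] (0:ℝ)) (𝓝 (1/c)) :=
    tendsto_const_nhds.div hden hc.ne'
  have hlim := (hA.mul (tendsto_I1 hK hKI hτ hc hγ M hM)).sub
    ((om1_ratio_tendsto γ hγ).mul (hB.mul (tendsto_I2 hKI hτ hc hγ hKint M hM)))
  have hfin := Tendsto.congr' (by filter_upwards [hgg] with ε h; exact h.symm) hlim
  convert hfin using 2
  rw [J1_eq hK hKI hc hKint M hM, J2_eq hτ hc hγ]
  simp only [phiF]
  field_simp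
  ring
end
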